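/- arXiv:2601.13152 — 4 statements merged into one kernel-verified Lean document; each statement's English description precedes it below -/
import Mathlib

section
/- For every natural number n ≥ 1, the product ∏_{i=1}^n (4i + 3) is not a perfect square. -/
/-- A partition as a weakly decreasing list of positive naturals. -/
def IsPartition (l : List ℕ) : Prop :=
  l.Pairwise (· ≥ ·) ∧ ∀ x ∈ l, 0 < x

/-- Membership of the (1-based) cell `(i, j)` in the Young diagram of `l`. -/
def cellMem (l : List ℕ) (i j : ℕ) : Prop :=
  1 ≤ i ∧ i ≤ l.length ∧ 1 ≤ j ∧ j ≤ l.getD (i - 1) 0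

/-- The `j`-th part of the conjugate partition: `λ'_j = |{i : λ_i ≥ j}|`. -/
def conjPart (l : List ℕ) (j : ℕ) : ℕ :=
  (l.filter (fun a => j ≤ a)).length

/-- The conjugate partition as a list. -/
def conjList (l : List ℕ) : List ℕ :=
  (List.range (l.headD 0)).map (fun i => conjPart l (i + 1))

/-- Hook length `h_{i,j}(λ) = (λ_i - j) + (λ'_j - i) + 1` (1-based coordinates). -/
def hookLength (l : List ℕ) (i j : ℕ) : ℕ :=
  (l.getD (i - 1) 0 - j) + (conjPart l j - i) + 1

/-- `λ` has a hook of size `h`. -/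
def HasHook (l : List ℕ) (h : ℕ) : Prop :=
  ∃ i j, cellMem l i j ∧ hookLength l i j = h

/-- The hook `H_{i,j}(λ)` as a set of cells. -/
def hookSet (l : List ℕ) (i j : ℕ) : Set (ℕ × ℕ) :=
  {q | (q.1 = i ∧ cellMem l i q.2 ∧ j ≤ q.2) ∨ (q.2 = j ∧ cellMem l q.1 j ∧ i ≤ q.1)}

/-- The rim hook `R_{i,j}(λ)` as a set of cells. -/
def rimSet (l : List ℕ) (i j : ℕ) : Set (ℕ × ℕ) :=
  {q | ∃ x y t : ℕ, (x, y) ∈ hookSet l i j ∧ cellMem l (x + t) (y + t) ∧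
      ¬ cellMem l (x + t + 1) (y + t + 1) ∧ q = (x + t, y + t)}

/-- `l'` is obtained from `l` by removing a rim hook of size `e`. -/
def RemovesHook (e : ℕ) (l l' : List ℕ) : Prop :=
  IsPartition l' ∧ ∃ i j, cellMem l i j ∧ hookLength l i j = e ∧
    ∀ a b, cellMem l' a b ↔ (cellMem l a b ∧ (a, b) ∉ rimSet l i j)

/-- `m` is the `e`-core of `l`: obtained by repeatedly removing `e`-hooks until none remain. -/
def IsECore (e : ℕ) (l m : List ℕ) : Prop :=
  IsPartition m ∧ Relation.ReflTransGen (RemovesHook e) l m ∧ ¬ HasHook m e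

/-- The staircase partition `γ_c = (c, c-1, ..., 1)`. -/
def staircase (c : ℕ) : List ℕ := (List.range c).reverse.map (· + 1)

/-- The sequence `(x_1 - (t-1), x_2 - (t-2), ..., x_t)` associated to a β-set `X`,
with `x_1 > x_2 > ... > x_t` the elements of `X` in decreasing order. -/
def betaList (X : Finset ℕ) : List ℕ :=
  ((X.sort (· ≤ ·)).reverse).mapIdx (fun k x => x - (X.card - 1 - k))

/-- The partition `P(X)` associated to a β-set `X` (dropping the zero parts). -/
def betaPartition (X : Finset ℕ) : List ℕ := (betaList X).filter (fun a => a ≠ 0)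

section ProofAux
open Nat Finset

lemma fact_val {p n : ℕ} (hp : p.Prime) (h : n < p ^ 2) :
    (n !).factorization p = n / p := by
  rcases Nat.eq_zero_or_pos n with rfl | hn
  · simp
  have : Fact p.Prime := ⟨hp⟩
  rw [Nat.factorization_def _ hp]
  rw [padicValNat_factorial (b := 2) (Nat.log_lt_of_lt_pow hn.ne' h)]
  have h12 : Finset.Ico 1 2 = {1} := rfl
  rw [h12]; simp

lemma choose_val {p n k : ℕ} (hp : p.Prime) (hkn : k ≤ n) (h : n < p ^ 2) :
    (n.choose k).factorization p + k / p + (n - k) / p = n / p := by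
  have hc : n.choose k ≠ 0 := (Nat.choose_pos hkn).ne'
  have h1 : n.choose k * k ! * (n - k)! = n ! := Nat.choose_mul_factorial_mul_factorial hkn
  have h2 : (n !).factorization p
      = (n.choose k).factorization p + (k !).factorization p + ((n - k)!).factorization p := by
    rw [← h1, Nat.factorization_mul (mul_ne_zero hc (factorial_ne_zero _)) (factorial_ne_zero _),
      Nat.factorization_mul hc (factorial_ne_zero _)]
    simp
  rw [fact_val hp h, fact_val hp (lt_of_le_of_lt (by omega) h),
    fact_val hp (lt_of_le_of_lt (Nat.sub_le n k) h)] at h2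
  omega

lemma div_eq_k {a p k : ℕ} (h1 : k * p ≤ a) (h2 : a < (k + 1) * p) : a / p = k :=
  Nat.div_eq_of_lt_le h1 h2

-- the key regional lemma
lemma region_dvd {s p : ℕ} (hs : 5 ≤ s) (hp : p.Prime)
    (hr : Nat.sqrt (6 * s) < p) (h5 : 6 * s < 5 * p) (h6 : p ≤ 6 * s)
    (hnp : ∀ q, q.Prime → 4 * s < q → q ≤ 6 * s → False)
    (hv : ((6 * s).choose (2 * s)).factorization p ≠ 0) :
    p ∣ (3 * s).choose s := by
  have hps : s < p := by omega
  have hp2 : 6 * s < p ^ 2 := by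
    calc 6 * s < (Nat.sqrt (6 * s) + 1) ^ 2 := Nat.lt_succ_sqrt' (6 * s)
      _ ≤ p ^ 2 := Nat.pow_le_pow_left (by omega) 2
  have hB := choose_val (n := 6 * s) (k := 2 * s) hp (by omega) hp2
  have h64 : 6 * s - 2 * s = 4 * s := by omega
  rw [h64] at hB
  have hC := choose_val (n := 3 * s) (k := s) hp (by omega) (by omega)
  have h32 : 3 * s - s = 2 * s := by omega
  rw [h32] at hC
  -- case analysis on region
  rcases le_or_gt p (4 * s) with h4s | h4s
  swap
  · exact absurd (hnp p hp h4s h6) (fun h => h)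
  rcases le_or_gt (3 * p) (4 * s) with hG3 | hG3
  · -- G3: v = 0, contradiction
    have e1 : 6 * s / p = 4 := div_eq_k (by omega) (by omega)
    have e2 : 2 * s / p = 1 := div_eq_k (by omega) (by omega)
    have e3 : 4 * s / p = 3 := div_eq_k (by omega) (by omega)
    omega
  rcases le_or_gt (2 * p) (3 * s) with hG4 | hG4
  · -- G4: p ∣ C3
    have e1 : 3 * s / p = 2 := div_eq_k (by omega) (by omega)
    have e2 : s / p = 0 := Nat.div_eq_of_lt hps
    have e3 : 2 * s / p = 1 := div_eq_k (by omega) (by omega)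
    exact Nat.dvd_of_factorization_pos (by omega)
  rcases le_or_gt p (2 * s) with hG5 | hG5
  · -- G5: v = 0
    have e1 : 6 * s / p = 3 := div_eq_k (by omega) (by omega)
    have e2 : 2 * s / p = 1 := div_eq_k (by omega) (by omega)
    have e3 : 4 * s / p = 2 := div_eq_k (by omega) (by omega)
    omega
  rcases le_or_gt p (3 * s) with hG6 | hG6
  · -- G6: p ∣ C3
    have e1 : 3 * s / p = 1 := div_eq_k (by omega) (by omega)
    have e2 : s / p = 0 := Nat.div_eq_of_lt hps
    have e3 : 2 * s / p = 0 := Nat.div_eq_of_lt (by omega)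
    exact Nat.dvd_of_factorization_pos (by omega)
  · -- G7: v = 0
    have e1 : 6 * s / p = 1 := div_eq_k (by omega) (by omega)
    have e2 : 2 * s / p = 0 := Nat.div_eq_of_lt (by omega)
    have e3 : 4 * s / p = 1 := div_eq_k (by omega) (by omega)
    omega


lemma prod_over_primes {B n : ℕ} (hB0 : B ≠ 0) (h : ∀ p, p.Prime → p ∣ B → p ≤ n) :
    B = ∏ p ∈ (Finset.range (n + 1)).filter Nat.Prime, p ^ B.factorization p := by
  have hsupp : B.primeFactors ⊆ (Finset.range (n + 1)).filter Nat.Prime := by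
    intro p hp
    have hpp : p.Prime := Nat.prime_of_mem_primeFactors hp
    have hpd : p ∣ B := Nat.dvd_of_mem_primeFactors hp
    exact Finset.mem_filter.mpr ⟨Finset.mem_range.mpr (by have := h p hpp hpd; omega), hpp⟩
  conv_lhs => rw [← Nat.factorization_prod_pow_eq_self hB0]
  rw [Nat.prod_factorization_eq_prod_primeFactors]
  refine Finset.prod_subset hsupp (fun p hpS hns => ?_)
  rw [Nat.factorization_eq_zero_of_not_dvd, pow_zero]
  intro hdvd
  exact hns (Nat.mem_primeFactors.mpr ⟨(Finset.mem_filter.mp hpS).2, hdvd, hB0⟩)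


lemma bound_B {s : ℕ} (hs : 5 ≤ s)
    (hnp : ∀ q, q.Prime → 4 * s < q → q ≤ 6 * s → False) :
    (6 * s).choose (2 * s)
      ≤ (6 * s) ^ (Nat.sqrt (6 * s) + 1) * 4 ^ (6 * s / 5) * (3 * s).choose s := by
  have hB0 : (6 * s).choose (2 * s) ≠ 0 := (Nat.choose_pos (by omega)).ne'
  have hfac : (6 * s).choose (2 * s) * (2 * s)! * (6 * s - 2 * s)! = (6 * s)! :=
    Nat.choose_mul_factorial_mul_factorial (by omega)
  have hdvdfac : (6 * s).choose (2 * s) ∣ (6 * s)! :=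
    ⟨(2 * s)! * (6 * s - 2 * s)!, by rw [← hfac]; ring⟩
  have hprod := prod_over_primes hB0 (fun p hp hpd =>
    (Nat.Prime.dvd_factorial hp).mp (hpd.trans hdvdfac) : ∀ p, p.Prime → _ → p ≤ 6 * s)
  set r := Nat.sqrt (6 * s) with hrdef
  set S : Finset ℕ := (Finset.range (6 * s + 1)).filter Nat.Prime with hSdef
  set v : ℕ → ℕ := fun p => ((6 * s).choose (2 * s)).factorization p with hvdef
  -- split S into small / mid / large
  have hsplit1 : S = (S.filter (fun p => p ≤ r)) ∪ (S.filter (fun p => ¬ p ≤ r)) :=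
    (Finset.filter_union_filter_not_eq _ S).symm
  have hsplit2 : S.filter (fun p => ¬ p ≤ r)
      = ((S.filter (fun p => ¬ p ≤ r)).filter (fun p => 5 * p ≤ 6 * s))
        ∪ ((S.filter (fun p => ¬ p ≤ r)).filter (fun p => ¬ 5 * p ≤ 6 * s)) :=
    (Finset.filter_union_filter_not_eq _ _).symm
  set T1 := S.filter (fun p => p ≤ r)
  set T2 := (S.filter (fun p => ¬ p ≤ r)).filter (fun p => 5 * p ≤ 6 * s)
  set T3 := (S.filter (fun p => ¬ p ≤ r)).filter (fun p => ¬ 5 * p ≤ 6 * s)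
  have hprodsplit : (6 * s).choose (2 * s)
      = (∏ p ∈ T1, p ^ v p) * ((∏ p ∈ T2, p ^ v p) * (∏ p ∈ T3, p ^ v p)) := by
    rw [hprod, hsplit1, Finset.prod_union (Finset.disjoint_filter_filter_not S S _),
      hsplit2, Finset.prod_union (Finset.disjoint_filter_filter_not _ _ _)]
  -- bound T1
  have hT1 : (∏ p ∈ T1, p ^ v p) ≤ (6 * s) ^ (r + 1) := by
    calc (∏ p ∈ T1, p ^ v p) ≤ (6 * s) ^ T1.card := by
          apply Finset.prod_le_pow_card
          intro p hp
          have hpp : p.Prime := (Finset.mem_filter.mp ((Finset.mem_filter.mp hp).1)).2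
          exact Nat.pow_factorization_choose_le (by omega)
      _ ≤ (6 * s) ^ (r + 1) := by
          apply Nat.pow_le_pow_right (by omega)
          calc T1.card ≤ (Finset.range (r + 1)).card := by
                apply Finset.card_le_card
                intro p hp
                have := (Finset.mem_filter.mp hp).2
                simp only [Finset.mem_range]; omega
            _ = r + 1 := Finset.card_range _
  -- bound T2
  have hsqlt : ∀ p : ℕ, r < p → 6 * s < p ^ 2 := by
    intro p hrp
    calc 6 * s < (r + 1) ^ 2 := Nat.lt_succ_sqrt' (6 * s)
      _ ≤ p ^ 2 := Nat.pow_le_pow_left (by omega) 2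
  have hT2 : (∏ p ∈ T2, p ^ v p) ≤ 4 ^ (6 * s / 5) := by
    calc (∏ p ∈ T2, p ^ v p) ≤ ∏ p ∈ T2, p := by
          apply Finset.prod_le_prod'
          intro p hp
          rcases Finset.mem_filter.mp hp with ⟨hp1, _⟩
          rcases Finset.mem_filter.mp hp1 with ⟨hpS, hrp⟩
          have hpp : p.Prime := (Finset.mem_filter.mp hpS).2
          have hv1 : v p ≤ 1 := Nat.factorization_choose_le_one (hsqlt p (by omega))
          calc p ^ v p ≤ p ^ 1 := Nat.pow_le_pow_right hpp.one_lt.le hv1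
            _ = p := pow_one p
      _ ≤ primorial (6 * s / 5) := by
          apply Finset.prod_le_prod_of_subset_of_one_le'
          · intro p hp
            rcases Finset.mem_filter.mp hp with ⟨hp1, hple⟩
            rcases Finset.mem_filter.mp hp1 with ⟨hpS, _⟩
            have hpp : p.Prime := (Finset.mem_filter.mp hpS).2
            refine Finset.mem_filter.mpr ⟨Finset.mem_range.mpr ?_, hpp⟩
            have : p ≤ 6 * s / 5 := Nat.le_div_iff_mul_le (by norm_num) |>.mpr (by omega)
            omega
          · intro p hp _
            exact ((Finset.mem_filter.mp hp).2).one_lt.le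
      _ ≤ 4 ^ (6 * s / 5) := primorial_le_4_pow _
  -- bound T3
  have hT3 : (∏ p ∈ T3, p ^ v p) ≤ (3 * s).choose s := by
    have hmem : ∀ p ∈ T3, p.Prime ∧ r < p ∧ 6 * s < 5 * p ∧ p ≤ 6 * s := by
      intro p hp
      rcases Finset.mem_filter.mp hp with ⟨hp1, hple⟩
      rcases Finset.mem_filter.mp hp1 with ⟨hpS, hrp⟩
      rcases Finset.mem_filter.mp hpS with ⟨hpr, hpp⟩
      exact ⟨hpp, by omega, by omega, by simp only [Finset.mem_range] at hpr; omega⟩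
    have heq : (∏ p ∈ T3, p ^ v p) = ∏ p ∈ T3.filter (fun p => v p ≠ 0), p ^ v p := by
      refine (Finset.prod_filter_of_ne ?_).symm
      intro p _ hne hv0
      exact hne (by rw [hv0, pow_zero])
    rw [heq]
    have hdvd : (∏ p ∈ T3.filter (fun p => v p ≠ 0), p ^ v p) ∣ (3 * s).choose s := by
      have : (∏ p ∈ T3.filter (fun p => v p ≠ 0), p ^ v p)
          = ∏ p ∈ T3.filter (fun p => v p ≠ 0), p := by
        apply Finset.prod_congr rfl
        intro p hp
        rcases Finset.mem_filter.mp hp with ⟨hpT3, hvne⟩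
        obtain ⟨hpp, hrp, h5p, h6p⟩ := hmem p hpT3
        have hv1 : v p ≤ 1 := Nat.factorization_choose_le_one (hsqlt p hrp)
        have : v p = 1 := by omega
        rw [this, pow_one]
      rw [this]
      apply Finset.prod_primes_dvd
      · intro p hp
        rcases Finset.mem_filter.mp hp with ⟨hpT3, _⟩
        exact (hmem p hpT3).1.prime
      · intro p hp
        rcases Finset.mem_filter.mp hp with ⟨hpT3, hvne⟩
        obtain ⟨hpp, hrp, h5p, h6p⟩ := hmem p hpT3
        exact region_dvd hs hpp hrp h5p h6p hnp hvne
    exact Nat.le_of_dvd (Nat.choose_pos (by omega)) hdvd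
  calc (6 * s).choose (2 * s)
      = (∏ p ∈ T1, p ^ v p) * ((∏ p ∈ T2, p ^ v p) * (∏ p ∈ T3, p ^ v p)) := hprodsplit
    _ ≤ (6 * s) ^ (r + 1) * (4 ^ (6 * s / 5) * (3 * s).choose s) := by
        apply Nat.mul_le_mul hT1 (Nat.mul_le_mul hT2 hT3)
    _ = (6 * s) ^ (r + 1) * 4 ^ (6 * s / 5) * (3 * s).choose s := by ring


private lemma term_sum (n : ℕ) :
    3 ^ n = ∑ k ∈ Finset.range (n + 1), 2 ^ k * n.choose k := by
  have := add_pow (2 : ℕ) 1 n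
  norm_num at this
  rw [← this]

lemma max_term (n k : ℕ) :
    (3 * n).choose k * 2 ^ k ≤ (3 * n).choose (2 * n) * 2 ^ (2 * n) := by
  set f : ℕ → ℕ := fun k => (3 * n).choose k * 2 ^ k with hf
  have step_up : ∀ j, j < 2 * n → f j ≤ f (j + 1) := by
    intro j hj
    have hid : (3 * n).choose (j + 1) * (j + 1) = (3 * n).choose j * (3 * n - j) :=
      Nat.choose_succ_right_eq _ _
    have key : (3 * n).choose j ≤ 2 * (3 * n).choose (j + 1) := by
      apply Nat.le_of_mul_le_mul_right (c := j + 1) _ (by omega)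
      calc (3 * n).choose j * (j + 1) ≤ (3 * n).choose j * (2 * (3 * n - j)) :=
            Nat.mul_le_mul_left _ (by omega)
        _ = 2 * ((3 * n).choose j * (3 * n - j)) := by ring
        _ = 2 * ((3 * n).choose (j + 1) * (j + 1)) := by rw [hid]
        _ = 2 * (3 * n).choose (j + 1) * (j + 1) := by ring
    show (3 * n).choose j * 2 ^ j ≤ (3 * n).choose (j + 1) * 2 ^ (j + 1)
    calc (3 * n).choose j * 2 ^ j ≤ 2 * (3 * n).choose (j + 1) * 2 ^ j :=
          Nat.mul_le_mul_right _ key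
      _ = (3 * n).choose (j + 1) * 2 ^ (j + 1) := by ring
  have step_down : ∀ j, 2 * n ≤ j → f (j + 1) ≤ f j := by
    intro j hj
    have hid : (3 * n).choose (j + 1) * (j + 1) = (3 * n).choose j * (3 * n - j) :=
      Nat.choose_succ_right_eq _ _
    have key : 2 * (3 * n).choose (j + 1) ≤ (3 * n).choose j := by
      apply Nat.le_of_mul_le_mul_right (c := j + 1) _ (by omega)
      calc 2 * (3 * n).choose (j + 1) * (j + 1) = 2 * ((3 * n).choose (j + 1) * (j + 1)) := by
            ring
        _ = 2 * ((3 * n).choose j * (3 * n - j)) := by rw [hid]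
        _ = (3 * n).choose j * (2 * (3 * n - j)) := by ring
        _ ≤ (3 * n).choose j * (j + 1) := Nat.mul_le_mul_left _ (by omega)
    show (3 * n).choose (j + 1) * 2 ^ (j + 1) ≤ (3 * n).choose j * 2 ^ j
    calc (3 * n).choose (j + 1) * 2 ^ (j + 1) = 2 * (3 * n).choose (j + 1) * 2 ^ j := by ring
      _ ≤ (3 * n).choose j * 2 ^ j := Nat.mul_le_mul_right _ key
  have asc : ∀ d, f (2 * n - d) ≤ f (2 * n) := by
    intro d
    induction d with
    | zero => simp
    | succ d ih =>
      rcases le_or_gt (2 * n) d with h | h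
      · have : 2 * n - (d + 1) = 2 * n - d := by omega
        rw [this]; exact ih
      · have h1 : 2 * n - (d + 1) < 2 * n := by omega
        have h2 : 2 * n - (d + 1) + 1 = 2 * n - d := by omega
        calc f (2 * n - (d + 1)) ≤ f (2 * n - (d + 1) + 1) := step_up _ h1
          _ = f (2 * n - d) := by rw [h2]
          _ ≤ f (2 * n) := ih
  have desc : ∀ d, f (2 * n + d) ≤ f (2 * n) := by
    intro d
    induction d with
    | zero => simp
    | succ d ih =>
      calc f (2 * n + (d + 1)) = f ((2 * n + d) + 1) := by ring_nf
        _ ≤ f (2 * n + d) := step_down _ (by omega)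
        _ ≤ f (2 * n) := ih
  rcases le_or_gt k (2 * n) with h | h
  · have : k = 2 * n - (2 * n - k) := by omega
    calc (3*n).choose k * 2 ^ k = f k := rfl
      _ = f (2 * n - (2 * n - k)) := by rw [← this]
      _ ≤ f (2 * n) := asc _
  · have : k = 2 * n + (k - 2 * n) := by omega
    calc (3*n).choose k * 2 ^ k = f k := rfl
      _ = f (2 * n + (k - 2 * n)) := by rw [← this]
      _ ≤ f (2 * n) := desc _

lemma lower_bound (n : ℕ) :
    3 ^ (3 * n) ≤ (3 * n + 1) * ((3 * n).choose (2 * n) * 2 ^ (2 * n)) := by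
  rw [term_sum (3 * n)]
  have := Finset.sum_le_card_nsmul (Finset.range (3 * n + 1))
    (fun k => 2 ^ k * (3 * n).choose k)
    ((3 * n).choose (2 * n) * 2 ^ (2 * n))
    (fun k _ => by simpa [mul_comm] using max_term n k)
  simpa [Finset.card_range, smul_eq_mul] using this

lemma upper_bound (s : ℕ) :
    (3 * s).choose s * 2 ^ (2 * s) ≤ 3 ^ (3 * s) := by
  rw [term_sum (3 * s)]
  have hmem : 2 * s ∈ Finset.range (3 * s + 1) := by
    simp; omega
  have := Finset.single_le_sum (f := fun k => 2 ^ k * (3 * s).choose k)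
    (fun i _ => Nat.zero_le _) hmem
  have hsymm : (3 * s).choose (2 * s) = (3 * s).choose s := by
    have : 3 * s - s = 2 * s := by omega
    rw [← this]
    exact Nat.choose_symm (by omega)
  calc (3 * s).choose s * 2 ^ (2 * s)
      = 2 ^ (2 * s) * (3 * s).choose (2 * s) := by
        rw [hsymm]; ring
    _ ≤ _ := this


lemma pow27 (s : ℕ) : 2 ^ (s / 5) * 4 ^ (2 * s + s / 5) ≤ 27 ^ s := by
  have hs : s = 5 * (s / 5) + s % 5 := (Nat.div_add_mod s 5).symm.trans (by ring_nf)
  set t := s / 5 with ht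
  set u := s % 5 with hu
  have he : 2 * s + t = 11 * t + 2 * u := by omega
  calc 2 ^ t * 4 ^ (2 * s + t) = 2 ^ t * 4 ^ (11 * t + 2 * u) := by rw [he]
    _ = (2 * 4 ^ 11) ^ t * (4 ^ 2) ^ u := by
        rw [pow_add, pow_mul, pow_mul, mul_pow]; ring
    _ ≤ (27 ^ 5) ^ t * 27 ^ u := by
        apply Nat.mul_le_mul
        · exact Nat.pow_le_pow_left (by norm_num) t
        · exact Nat.pow_le_pow_left (by norm_num) u
    _ = 27 ^ (5 * t + u) := by rw [pow_add, pow_mul]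
    _ = 27 ^ s := by rw [← hs]

lemma exp_ineq : ∀ j, 18 ≤ j → (j + 4) * (2 ^ ((j + 5) / 2) + 2) + 1 ≤ 2 ^ j / 5 := by
  intro j
  induction j using Nat.strong_induction_on with
  | _ j ih =>
    intro hj
    by_cases h18 : j = 18
    · subst h18; norm_num
    by_cases h19 : j = 19
    · subst h19; norm_num
    obtain ⟨k, rfl⟩ : ∃ k, j = k + 2 := ⟨j - 2, by omega⟩
    have hk : 18 ≤ k := by omega
    have ihk := ih k (by omega) hk
    have hsplit : (k + 2 + 5) / 2 = (k + 5) / 2 + 1 := by omega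
    set P := 2 ^ ((k + 5) / 2) with hP
    have hPj : 2 ^ ((k + 2 + 5) / 2) = 2 * P := by rw [hsplit, pow_succ]; ring
    have hstep : (k + 2 + 4) * (2 ^ ((k + 2 + 5) / 2) + 2) + 1
        ≤ 4 * ((k + 4) * (P + 2) + 1) := by
      rw [hPj]
      have h1 : (k + 2 + 4) * (2 * P + 2) + 1 = 2 * (k + 6) * P + (2 * k + 13) := by ring
      have h2 : 4 * ((k + 4) * (P + 2) + 1) = 4 * (k + 4) * P + (8 * k + 36) := by ring
      rw [h1, h2]
      have h3 : 2 * (k + 6) * P ≤ 4 * (k + 4) * P := Nat.mul_le_mul_right P (by omega)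
      omega
    have hdiv : 4 * (2 ^ k / 5) ≤ 2 ^ (k + 2) / 5 := by
      have h4 : 2 ^ (k + 2) = 4 * 2 ^ k := by rw [pow_add]; ring
      rw [h4]
      omega
    calc (k + 2 + 4) * (2 ^ ((k + 2 + 5) / 2) + 2) + 1 ≤ 4 * ((k + 4) * (P + 2) + 1) := hstep
      _ ≤ 4 * (2 ^ k / 5) := by omega
      _ ≤ 2 ^ (k + 2) / 5 := hdiv


lemma exists_prime_4s_6s {s : ℕ} (hs : 2 ^ 18 ≤ s) :
    ∃ p, p.Prime ∧ 4 * s < p ∧ p ≤ 6 * s := by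
  by_contra hcon
  push_neg at hcon
  have hnp : ∀ q, q.Prime → 4 * s < q → q ≤ 6 * s → False := by
    intro q hq h1 h2
    have := hcon q hq h1
    omega
  have hs5 : 5 ≤ s := le_trans (by norm_num) hs
  set B := (6 * s).choose (2 * s) with hBdef
  set C3 := (3 * s).choose s with hC3def
  set r := Nat.sqrt (6 * s) with hrdef
  set A := 6 * s + 1 with hAdef
  have h2 : B ≤ (6 * s) ^ (r + 1) * 4 ^ (6 * s / 5) * C3 := bound_B hs5 hnp
  have h1 : 3 ^ (6 * s) ≤ A * (B * 2 ^ (4 * s)) := by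
    have := lower_bound (2 * s)
    have e1 : 3 * (2 * s) = 6 * s := by ring
    have e2 : 2 * (2 * s) = 4 * s := by ring
    rw [e1, e2] at this
    have e3 : (6 * s).choose (4 * s) = B := by
      rw [hBdef]
      have : 6 * s - 2 * s = 4 * s := by omega
      rw [← this]
      exact Nat.choose_symm (by omega)
    rw [e3] at this
    exact this
  have h3 : C3 * 2 ^ (2 * s) ≤ 3 ^ (3 * s) := upper_bound s
  -- combine
  have hchain : 3 ^ (3 * s) * (3 ^ (3 * s) * 2 ^ (2 * s))
      ≤ 3 ^ (3 * s) * (A * 2 ^ (4 * s) * ((6 * s) ^ (r + 1) * 4 ^ (6 * s / 5))) := by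
    calc 3 ^ (3 * s) * (3 ^ (3 * s) * 2 ^ (2 * s))
        = 3 ^ (6 * s) * 2 ^ (2 * s) := by
          rw [← mul_assoc, ← pow_add]
          congr 2
          omega
      _ ≤ A * (B * 2 ^ (4 * s)) * 2 ^ (2 * s) := Nat.mul_le_mul_right _ h1
      _ = A * 2 ^ (4 * s) * (B * 2 ^ (2 * s)) := by ring
      _ ≤ A * 2 ^ (4 * s) * ((6 * s) ^ (r + 1) * 4 ^ (6 * s / 5) * C3 * 2 ^ (2 * s)) := by
          apply Nat.mul_le_mul_left
          exact Nat.mul_le_mul_right _ h2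
      _ = A * 2 ^ (4 * s) * ((6 * s) ^ (r + 1) * 4 ^ (6 * s / 5)) * (C3 * 2 ^ (2 * s)) := by
          ring
      _ ≤ A * 2 ^ (4 * s) * ((6 * s) ^ (r + 1) * 4 ^ (6 * s / 5)) * 3 ^ (3 * s) := by
          exact Nat.mul_le_mul_left _ h3
      _ = 3 ^ (3 * s) * (A * 2 ^ (4 * s) * ((6 * s) ^ (r + 1) * 4 ^ (6 * s / 5))) := by ring
  have h4 : 3 ^ (3 * s) * 2 ^ (2 * s)
      ≤ A * 2 ^ (4 * s) * ((6 * s) ^ (r + 1) * 4 ^ (6 * s / 5)) :=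
    Nat.le_of_mul_le_mul_left hchain (by positivity)
  have h5 : 3 ^ (3 * s) ≤ A * (6 * s) ^ (r + 1) * 4 ^ (s + 6 * s / 5) := by
    have e4 : (2 : ℕ) ^ (4 * s) = 2 ^ (2 * s) * 4 ^ s := by
      rw [show (4:ℕ) = 2^2 from rfl, ← pow_mul]
      rw [← pow_add]
      congr 1
      omega
    rw [e4] at h4
    have h4' : 3 ^ (3 * s) * 2 ^ (2 * s)
        ≤ (A * (6 * s) ^ (r + 1) * 4 ^ (s + 6 * s / 5)) * 2 ^ (2 * s) := by
      calc 3 ^ (3 * s) * 2 ^ (2 * s) ≤ A * (2 ^ (2 * s) * 4 ^ s)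
            * ((6 * s) ^ (r + 1) * 4 ^ (6 * s / 5)) := h4
        _ = (A * (6 * s) ^ (r + 1) * 4 ^ (s + 6 * s / 5)) * 2 ^ (2 * s) := by
            rw [pow_add]; ring
    exact Nat.le_of_mul_le_mul_right h4' (by positivity)
  have hdiv : 6 * s / 5 = s + s / 5 := by omega
  rw [hdiv] at h5
  have h5' : 27 ^ s ≤ A * (6 * s) ^ (r + 1) * 4 ^ (2 * s + s / 5) := by
    have e5 : (27 : ℕ) ^ s = 3 ^ (3 * s) := by
      rw [show (27:ℕ) = 3^3 from rfl, ← pow_mul]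
    have e6 : s + (s + s / 5) = 2 * s + s / 5 := by omega
    rw [e5]
    rw [e6] at h5
    exact h5
  -- now the numeric contradiction
  have hp27 := pow27 s
  have h6 : 2 ^ (s / 5) * 4 ^ (2 * s + s / 5)
      ≤ (A * (6 * s) ^ (r + 1)) * 4 ^ (2 * s + s / 5) := by
    calc 2 ^ (s / 5) * 4 ^ (2 * s + s / 5) ≤ 27 ^ s := hp27
      _ ≤ A * (6 * s) ^ (r + 1) * 4 ^ (2 * s + s / 5) := h5'
  have h7 : 2 ^ (s / 5) ≤ A * (6 * s) ^ (r + 1) :=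
    Nat.le_of_mul_le_mul_right h6 (by positivity)
  -- upper bound on A * (6s)^(r+1)
  set j := Nat.log 2 s with hjdef
  have hs0 : s ≠ 0 := by omega
  have hj18 : 18 ≤ j := (Nat.le_log_iff_pow_le (by norm_num) hs0).mpr hs
  have h2j : 2 ^ j ≤ s := Nat.pow_log_le_self 2 hs0
  have hj2 : s < 2 ^ (j + 1) := Nat.lt_pow_succ_log_self (by norm_num) s
  have h6s : 6 * s < 2 ^ (j + 4) := by
    calc 6 * s < 6 * 2 ^ (j + 1) := by omega
      _ ≤ 8 * 2 ^ (j + 1) := by omega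
      _ = 2 ^ (j + 4) := by rw [pow_add, pow_add]; ring
  set e := (j + 5) / 2 with hedef
  have hre : r ≤ 2 ^ e := by
    have h2e : 6 * s ≤ (2 ^ e) ^ 2 := by
      rw [← pow_mul]
      calc 6 * s ≤ 2 ^ (j + 4) := le_of_lt h6s
        _ ≤ 2 ^ (e * 2) := Nat.pow_le_pow_right (by norm_num) (by omega)
    calc r = Nat.sqrt (6 * s) := hrdef
      _ ≤ Nat.sqrt ((2 ^ e) ^ 2) := Nat.sqrt_le_sqrt h2e
      _ = 2 ^ e := Nat.sqrt_eq' _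
  have hbig : A * (6 * s) ^ (r + 1) ≤ 2 ^ ((j + 4) * (2 ^ e + 2)) := by
    calc A * (6 * s) ^ (r + 1) ≤ 2 ^ (j + 4) * (2 ^ (j + 4)) ^ (2 ^ e + 1) := by
          apply Nat.mul_le_mul
          · omega
          · exact Nat.pow_le_pow_left (le_of_lt h6s) _ |>.trans
              (Nat.pow_le_pow_right (by positivity) (by omega))
      _ = 2 ^ ((j + 4) * (2 ^ e + 2)) := by
          rw [← pow_mul, ← pow_add]
          congr 1
          ring
  have hexp := exp_ineq j hj18
  rw [← hedef] at hexp
  have hlt : A * (6 * s) ^ (r + 1) < 2 ^ (s / 5) := by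
    calc A * (6 * s) ^ (r + 1) ≤ 2 ^ ((j + 4) * (2 ^ e + 2)) := hbig
      _ < 2 ^ (s / 5) := by
          apply Nat.pow_lt_pow_right (by norm_num)
          have : 2 ^ j / 5 ≤ s / 5 := Nat.div_le_div_right h2j
          omega
  exact absurd (lt_of_le_of_lt h7 hlt) (lt_irrefl _)


lemma prime_interval_small {N : ℕ} (h1 : 21 ≤ N) (h2 : N < 7949679) :
    ∃ p, p.Prime ∧ 3 * p ≤ N ∧ N < 5 * p := by
  rcases lt_or_ge N 33 with h | h1
  · exact ⟨7, by norm_num, by omega, by omega⟩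
  rcases lt_or_ge N 51 with h | h1
  · exact ⟨11, by norm_num, by omega, by omega⟩
  rcases lt_or_ge N 69 with h | h1
  · exact ⟨17, by norm_num, by omega, by omega⟩
  rcases lt_or_ge N 111 with h | h1
  · exact ⟨23, by norm_num, by omega, by omega⟩
  rcases lt_or_ge N 183 with h | h1
  · exact ⟨37, by norm_num, by omega, by omega⟩
  rcases lt_or_ge N 303 with h | h1
  · exact ⟨61, by norm_num, by omega, by omega⟩
  rcases lt_or_ge N 501 with h | h1
  · exact ⟨101, by norm_num, by omega, by omega⟩
  rcases lt_or_ge N 831 with h | h1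
  · exact ⟨167, by norm_num, by omega, by omega⟩
  rcases lt_or_ge N 1383 with h | h1
  · exact ⟨277, by norm_num, by omega, by omega⟩
  rcases lt_or_ge N 2283 with h | h1
  · exact ⟨461, by norm_num, by omega, by omega⟩
  rcases lt_or_ge N 3777 with h | h1
  · exact ⟨761, by norm_num, by omega, by omega⟩
  rcases lt_or_ge N 6267 with h | h1
  · exact ⟨1259, by norm_num, by omega, by omega⟩
  rcases lt_or_ge N 10407 with h | h1
  · exact ⟨2089, by norm_num, by omega, by omega⟩
  rcases lt_or_ge N 17337 with h | h1
  · exact ⟨3469, by norm_num, by omega, by omega⟩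
  rcases lt_or_ge N 28893 with h | h1
  · exact ⟨5779, by norm_num, by omega, by omega⟩
  rcases lt_or_ge N 48099 with h | h1
  · exact ⟨9631, by norm_num, by omega, by omega⟩
  rcases lt_or_ge N 80151 with h | h1
  · exact ⟨16033, by norm_num, by omega, by omega⟩
  rcases lt_or_ge N 133557 with h | h1
  · exact ⟨26717, by norm_num, by omega, by omega⟩
  rcases lt_or_ge N 222591 with h | h1
  · exact ⟨44519, by norm_num, by omega, by omega⟩
  rcases lt_or_ge N 370983 with h | h1
  · exact ⟨74197, by norm_num, by omega, by omega⟩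
  rcases lt_or_ge N 618249 with h | h1
  · exact ⟨123661, by norm_num, by omega, by omega⟩
  rcases lt_or_ge N 1030299 with h | h1
  · exact ⟨206083, by norm_num, by omega, by omega⟩
  rcases lt_or_ge N 1717161 with h | h1
  · exact ⟨343433, by norm_num, by omega, by omega⟩
  rcases lt_or_ge N 2861931 with h | h1
  · exact ⟨572387, by norm_num, by omega, by omega⟩
  rcases lt_or_ge N 4769823 with h | h1
  · exact ⟨953977, by norm_num, by omega, by omega⟩
  rcases lt_or_ge N 7949679 with h | h1
  · exact ⟨1589941, by norm_num, by omega, by omega⟩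
  omega


lemma val_prod_one {n p : ℕ} (hp : p.Prime) (h5 : 4 * n + 3 < 5 * p)
    (hcase : (p % 4 = 3 ∧ 7 ≤ p ∧ p ≤ 4 * n + 3) ∨ (p % 4 = 1 ∧ 3 * p ≤ 4 * n + 3)) :
    (∏ i ∈ Finset.Icc 1 n, (4 * i + 3)).factorization p = 1 := by
  have hp5 : 5 ≤ p := by
    rcases hcase with ⟨h1, h2, _⟩ | ⟨h1, _⟩
    · omega
    · have := hp.one_lt; omega
  set i₀ : ℕ := if p % 4 = 3 then (p - 3) / 4 else (3 * p - 3) / 4 with hi₀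
  have hi₀val : (p % 4 = 3 ∧ 4 * i₀ + 3 = p) ∨ (p % 4 = 1 ∧ 4 * i₀ + 3 = 3 * p) := by
    rcases hcase with ⟨h1, h2, h3⟩ | ⟨h1, h2⟩
    · left; simp only [hi₀, if_pos h1]; omega
    · right; have : ¬ (p % 4 = 3) := by omega
      simp only [hi₀, if_neg this]; omega
  have hi₀mem : i₀ ∈ Finset.Icc 1 n := by
    simp only [Finset.mem_Icc]
    rcases hcase with ⟨h1, h2, h3⟩ | ⟨h1, h2⟩ <;> rcases hi₀val with ⟨hv1, hv2⟩ | ⟨hv1, hv2⟩ <;>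
      omega
  have hprod : (∏ i ∈ Finset.Icc 1 n, (4 * i + 3)).factorization
      = ∑ i ∈ Finset.Icc 1 n, (4 * i + 3).factorization :=
    Nat.factorization_prod (fun i _ => by omega)
  have happ : (∏ i ∈ Finset.Icc 1 n, (4 * i + 3)).factorization p
      = ∑ i ∈ Finset.Icc 1 n, (4 * i + 3).factorization p := by
    rw [hprod]; exact Finset.sum_apply' p
  rw [happ]
  rw [Finset.sum_eq_single i₀]
  · -- value at i₀ is 1
    rcases hi₀val with ⟨hv1, hv2⟩ | ⟨hv1, hv2⟩
    · rw [hv2, hp.factorization]; simp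
    · rw [hv2, Nat.factorization_mul (by norm_num) (by omega)]
      have h3 : (3 : ℕ).factorization p = 0 := by
        apply Nat.factorization_eq_zero_of_not_dvd
        intro hdvd
        have := Nat.le_of_dvd (by norm_num) hdvd
        omega
      simp [h3, hp.factorization]
  · -- other terms vanish
    intro i hi hne
    apply Nat.factorization_eq_zero_of_not_dvd
    intro hdvd
    obtain ⟨k, hk⟩ := hdvd
    have hik : i ≤ n := (Finset.mem_Icc.mp hi).2
    have hk5 : k < 5 := by
      by_contra hge
      have : 5 * p ≤ p * k := by
        calc 5 * p = p * 5 := by ring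
        _ ≤ p * k := Nat.mul_le_mul_left p (by omega)
      omega
    interval_cases k <;> rcases hi₀val with ⟨hv1, hv2⟩ | ⟨hv1, hv2⟩ <;> omega
  · intro h; exact absurd hi₀mem h

end ProofAux

lemma prime_interval {N : ℕ} (h1 : 21 ≤ N) :
    ∃ p, p.Prime ∧ 3 * p ≤ N ∧ N < 5 * p := by
  rcases lt_or_ge N 7949679 with h | h
  · exact prime_interval_small h1 h
  · obtain ⟨p, hp, h4, h6⟩ := exists_prime_4s_6s (s := N / 20 + 1) (by norm_num; omega)
    exact ⟨p, hp, by omega, by omega⟩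

theorem product_four_i_plus_three_not_square (n : ℕ) (hn : 1 ≤ n) :
    ¬ ∃ m : ℕ, (∏ i ∈ Finset.Icc 1 n, (4 * i + 3)) = m ^ 2 := by
  rintro ⟨m, hm⟩
  obtain ⟨p, hp, h5, hcase⟩ : ∃ p, p.Prime ∧ 4 * n + 3 < 5 * p ∧
      ((p % 4 = 3 ∧ 7 ≤ p ∧ p ≤ 4 * n + 3) ∨ (p % 4 = 1 ∧ 3 * p ≤ 4 * n + 3)) := by
    rcases le_or_gt n 7 with h | h
    · exact ⟨7, by norm_num, by omega, Or.inl ⟨by norm_num, by norm_num, by omega⟩⟩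
    · obtain ⟨p, hp, h3p, h5p⟩ := prime_interval (N := 4 * n + 3) (by omega)
      have hne2 : p ≠ 2 := by omega
      have hodd : p % 2 = 1 := Nat.odd_iff.mp (hp.odd_of_ne_two hne2)
      have hmod : p % 4 = 1 ∨ p % 4 = 3 := by omega
      rcases hmod with h1 | h3
      · exact ⟨p, hp, by omega, Or.inr ⟨h1, h3p⟩⟩
      · exact ⟨p, hp, by omega, Or.inl ⟨h3, by omega, by omega⟩⟩
  have hval := val_prod_one hp h5 hcase
  rw [hm, Nat.factorization_pow] at hval
  simp only [Finsupp.smul_apply, smul_eq_mul] at hval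
  omega
end

section
/- For every natural number n ≥ 1, the product ∏_{i=1}^n (4i - 3) = 1 · 5 · 9 · ... · (4n-3) is not a perfect square for n ≥ 2, and more precisely ∏_{i=1}^n (4i+1) is never a perfect square. -/
open Nat Finset

/-- Legendre's formula, `factorization` form. -/
lemma legendre {p : ℕ} (hp : p.Prime) {n b : ℕ} (hb : Nat.log p n < b) :
    (n !).factorization p = ∑ i ∈ Ico 1 b, n / p ^ i := by
  have h := Nat.Prime.emultiplicity_factorial hp hb
  have hfin : multiplicity p (n !) = ∑ i ∈ Ico 1 b, n / p ^ i :=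
    multiplicity_eq_of_emultiplicity_eq_some h
  rw [← Nat.multiplicity_eq_factorization hp (Nat.factorial_ne_zero n), hfin]

lemma div_div_comm' (n a b : ℕ) : n / a / b = n / b / a := by
  rw [Nat.div_div_eq_div_mul, Nat.div_div_eq_div_mul, Nat.mul_comm]

/-- The denominator divides the numerator. -/
lemma Ldvd (n : ℕ) : ((n / 2)! * ((n / 3)! * (n / 5)!)) ∣ (n ! * (n / 30)!) := by
  have h20 : (n ! * (n / 30)!) ≠ 0 := by positivity
  have h10 : ((n / 2)! * ((n / 3)! * (n / 5)!)) ≠ 0 := by positivity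
  rw [← Nat.factorization_le_iff_dvd h10 h20, Finsupp.le_def]
  intro p
  by_cases hp : p.Prime
  · rw [Nat.factorization_mul (by positivity) (by positivity),
        Nat.factorization_mul (by positivity) (by positivity),
        Nat.factorization_mul (by positivity) (by positivity)]
    simp only [Finsupp.add_apply]
    set b := Nat.log p n + 1 with hbdef
    have l1 := legendre hp (n := n) (b := b) (by omega)
    have l2 := legendre hp (n := n / 2) (b := b)
      (by have := Nat.log_mono_right (b := p) (Nat.div_le_self n 2); omega)
    have l3 := legendre hp (n := n / 3) (b := b)
      (by have := Nat.log_mono_right (b := p) (Nat.div_le_self n 3); omega)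
    have l5 := legendre hp (n := n / 5) (b := b)
      (by have := Nat.log_mono_right (b := p) (Nat.div_le_self n 5); omega)
    have l30 := legendre hp (n := n / 30) (b := b)
      (by have := Nat.log_mono_right (b := p) (Nat.div_le_self n 30); omega)
    rw [l1, l2, l3, l5, l30, ← Finset.sum_add_distrib, ← Finset.sum_add_distrib,
      ← Finset.sum_add_distrib]
    apply Finset.sum_le_sum
    intro i _
    rw [div_div_comm' n 2, div_div_comm' n 3, div_div_comm' n 5, div_div_comm' n 30]
    omega
  · simp [Nat.factorization_eq_zero_of_not_prime _ hp]

/-- The Chebyshev-style quotient. -/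
def Dn (n : ℕ) : ℕ := (n ! * (n / 30)!) / ((n / 2)! * ((n / 3)! * (n / 5)!))

lemma Dn_mul_eq (n : ℕ) : Dn n * ((n / 2)! * ((n / 3)! * (n / 5)!)) = n ! * (n / 30)! :=
  Nat.div_mul_cancel (Ldvd n)

lemma Dn_pos (n : ℕ) : 1 ≤ Dn n := by
  rcases Nat.eq_zero_or_pos (Dn n) with h | h
  · exfalso
    have := Dn_mul_eq n
    rw [h, zero_mul] at this
    have : (n ! * (n / 30)!) ≠ 0 := by positivity
    omega
  · exact h

def Qc : ℕ := 1007769600000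

lemma vDn_formula {p : ℕ} (hp : p.Prime) (n b : ℕ) (hb : Nat.log p n < b) :
    (Dn n).factorization p
      = ∑ i ∈ Ico 1 b, ((n / p ^ i + (n / p ^ i) / 30)
          - ((n / p ^ i) / 2 + ((n / p ^ i) / 3 + (n / p ^ i) / 5))) := by
  have hfac := Nat.factorization_div (Ldvd n)
  have happ : (Dn n).factorization p
      = (n ! * (n / 30)!).factorization p
        - ((n / 2)! * ((n / 3)! * (n / 5)!)).factorization p := by
    rw [show Dn n = (n ! * (n / 30)!) / ((n / 2)! * ((n / 3)! * (n / 5)!)) from rfl, hfac]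
    simp
  rw [happ, Nat.factorization_mul (by positivity) (by positivity),
      Nat.factorization_mul (by positivity) (by positivity),
      Nat.factorization_mul (by positivity) (by positivity)]
  simp only [Finsupp.add_apply]
  have l1 := legendre hp (n := n) (b := b) hb
  have l2 := legendre hp (n := n / 2) (b := b)
    (by have := Nat.log_mono_right (b := p) (Nat.div_le_self n 2); omega)
  have l3 := legendre hp (n := n / 3) (b := b)
    (by have := Nat.log_mono_right (b := p) (Nat.div_le_self n 3); omega)
  have l5 := legendre hp (n := n / 5) (b := b)
    (by have := Nat.log_mono_right (b := p) (Nat.div_le_self n 5); omega)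
  have l30 := legendre hp (n := n / 30) (b := b)
    (by have := Nat.log_mono_right (b := p) (Nat.div_le_self n 30); omega)
  rw [l1, l2, l3, l5, l30, ← Finset.sum_add_distrib, ← Finset.sum_add_distrib,
    ← Finset.sum_add_distrib]
  rw [eq_comm]
  apply Nat.eq_sub_of_add_eq
  rw [← Finset.sum_add_distrib]
  apply Finset.sum_congr rfl
  intro i _
  rw [div_div_comm' n 2, div_div_comm' n 3, div_div_comm' n 5, div_div_comm' n 30]
  omega

lemma vDn_le_log {p : ℕ} (hp : p.Prime) (n : ℕ) :
    (Dn n).factorization p ≤ Nat.log p n := by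
  rw [vDn_formula hp n (Nat.log p n + 1) (by omega)]
  calc ∑ i ∈ Ico 1 (Nat.log p n + 1), ((n / p ^ i + (n / p ^ i) / 30)
          - ((n / p ^ i) / 2 + ((n / p ^ i) / 3 + (n / p ^ i) / 5)))
      ≤ ∑ _i ∈ Ico 1 (Nat.log p n + 1), 1 := by
        apply Finset.sum_le_sum
        intro i _
        omega
    _ = Nat.log p n := by simp

lemma vDn_ge_one {p : ℕ} (hp : p.Prime) {n : ℕ} (h6 : n / 6 < p) (hpn : p ≤ n) :
    1 ≤ (Dn n).factorization p := by
  have hn0 : n ≠ 0 := by omega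
  have hlog : 1 ≤ Nat.log p n := Nat.log_pos hp.one_lt hpn
  rw [vDn_formula hp n (Nat.log p n + 1) (by omega)]
  have h1m : (1 : ℕ) ∈ Ico 1 (Nat.log p n + 1) := by
    rw [Finset.mem_Ico]
    omega
  apply le_trans _ (Finset.single_le_sum (f := fun i => ((n / p ^ i + (n / p ^ i) / 30)
          - ((n / p ^ i) / 2 + ((n / p ^ i) / 3 + (n / p ^ i) / 5)))) (fun i _ => Nat.zero_le _) h1m)
  have hy1 : 1 ≤ n / p := (Nat.one_le_div_iff hp.pos).mpr hpn
  have hy5 : n / p < 6 := by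
    rw [Nat.div_lt_iff_lt_mul hp.pos]
    omega
  simp only [pow_one]
  omega

def Fp (n : ℕ) : Finset ℕ := (Finset.range (n + 1)).filter Nat.Prime

lemma Dn_eq_prod (n : ℕ) (hn : n ≠ 0) :
    Dn n = ∏ p ∈ Fp n, p ^ (Dn n).factorization p := by
  have hD0 : Dn n ≠ 0 := by have := Dn_pos n; omega
  have hsupp : (Dn n).factorization.support ⊆ Fp n := by
    intro q hq
    rw [Nat.support_factorization] at hq
    have hq' : q.Prime := Nat.prime_of_mem_primeFactors hq
    have hdvd : q ∣ Dn n := Nat.dvd_of_mem_primeFactors hq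
    have hdvdL : q ∣ n ! * (n / 30)! := hdvd.trans ⟨_, (Dn_mul_eq n).symm⟩
    have hqn : q ≤ n := by
      rcases (Nat.Prime.dvd_mul hq').mp hdvdL with h | h
      · exact (Nat.Prime.dvd_factorial hq').mp h
      · exact le_trans ((Nat.Prime.dvd_factorial hq').mp h) (Nat.div_le_self n 30)
    simp only [Fp, Finset.mem_filter, Finset.mem_range]
    exact ⟨by omega, hq'⟩
  calc Dn n = (Dn n).factorization.prod (· ^ ·) :=
        (Nat.factorization_prod_pow_eq_self hD0).symm
    _ = ∏ p ∈ (Dn n).factorization.support, p ^ (Dn n).factorization p := rfl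
    _ = ∏ p ∈ Fp n, p ^ (Dn n).factorization p := by
        apply Finset.prod_subset hsupp
        intro x _ hx
        rw [Finsupp.notMem_support_iff.mp hx, pow_zero]

lemma sqrt_le_div6 {n : ℕ} (hn : 100 ≤ n) : Nat.sqrt n ≤ n / 6 := by
  by_contra h
  push_neg at h
  have h1 : n / 6 + 1 ≤ Nat.sqrt n := h
  have h2 : (n / 6 + 1) * (n / 6 + 1) ≤ Nat.sqrt n * Nat.sqrt n :=
    Nat.mul_le_mul h1 h1
  have h3 : Nat.sqrt n * Nat.sqrt n ≤ n := by
    have := Nat.sqrt_le' n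
    nlinarith [Nat.sqrt_le' n]
  have h4 : 16 ≤ n / 6 := by omega
  have h5 : 16 * (n / 6) ≤ (n / 6) * (n / 6) := Nat.mul_le_mul_right _ (by omega)
  have h6 : (n / 6 + 1) * (n / 6 + 1) = (n / 6) * (n / 6) + 2 * (n / 6) + 1 := by ring
  omega

/-- Main upper bound for `Dn` by splitting primes into three ranges. -/
lemma Dn_le_split (n : ℕ) (hn : 100 ≤ n) :
    Dn n ≤ n ^ Nat.sqrt n * ((primorial (n / 6)) *
      ∏ p ∈ (Fp n).filter (fun p => n / 6 < p), p) := by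
  have hn0 : n ≠ 0 := by omega
  rw [Dn_eq_prod n hn0]
  rw [← Finset.prod_filter_mul_prod_filter_not (Fp n) (fun p => n / 6 < p)]
  rw [mul_comm, ← mul_assoc]
  apply Nat.mul_le_mul
  · -- primes ≤ n/6 : split again at sqrt n
    rw [← Finset.prod_filter_mul_prod_filter_not
      ((Fp n).filter (fun p => ¬ n / 6 < p)) (fun p => p ≤ Nat.sqrt n)]
    apply Nat.mul_le_mul
    · -- small primes: each factor ≤ n, count ≤ sqrt n
      calc ∏ p ∈ ((Fp n).filter (fun p => ¬ n / 6 < p)).filter (fun p => p ≤ Nat.sqrt n),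
              p ^ (Dn n).factorization p
          ≤ ∏ _p ∈ ((Fp n).filter (fun p => ¬ n / 6 < p)).filter (fun p => p ≤ Nat.sqrt n), n := by
            apply Finset.prod_le_prod'
            intro p hp
            simp only [Finset.mem_filter, Fp, Finset.mem_range] at hp
            obtain ⟨⟨⟨hpn, hpp⟩, _⟩, hps⟩ := hp
            calc p ^ (Dn n).factorization p ≤ p ^ Nat.log p n :=
                  Nat.pow_le_pow_right hpp.pos (vDn_le_log hpp n)
              _ ≤ n := Nat.pow_log_le_self p hn0
        _ = n ^ (((Fp n).filter (fun p => ¬ n / 6 < p)).filter (fun p => p ≤ Nat.sqrt n)).card :=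
            (Finset.prod_const n)
        _ ≤ n ^ Nat.sqrt n := by
            apply Nat.pow_le_pow_right (by omega)
            calc (((Fp n).filter (fun p => ¬ n / 6 < p)).filter (fun p => p ≤ Nat.sqrt n)).card
                ≤ (Finset.Ico 2 (Nat.sqrt n + 1)).card := by
                  apply Finset.card_le_card
                  intro p hp
                  simp only [Finset.mem_filter, Fp, Finset.mem_range] at hp
                  rw [Finset.mem_Ico]
                  exact ⟨hp.1.1.2.two_le, by omega⟩
              _ ≤ Nat.sqrt n := by rw [Nat.card_Ico]; omega
    · -- medium primes : exponent ≤ 1, product ≤ primorial (n/6)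
      calc ∏ p ∈ ((Fp n).filter (fun p => ¬ n / 6 < p)).filter (fun p => ¬ p ≤ Nat.sqrt n),
              p ^ (Dn n).factorization p
          ≤ ∏ p ∈ ((Fp n).filter (fun p => ¬ n / 6 < p)).filter (fun p => ¬ p ≤ Nat.sqrt n), p := by
            apply Finset.prod_le_prod'
            intro p hp
            simp only [Finset.mem_filter, Fp, Finset.mem_range] at hp
            obtain ⟨⟨⟨hpn, hpp⟩, h6⟩, hs⟩ := hp
            have hlog1 : Nat.log p n ≤ 1 := by
              by_contra hl
              push_neg at hl
              have : p ^ 2 ≤ p ^ Nat.log p n := Nat.pow_le_pow_right hpp.pos hl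
              have h2 : p ^ Nat.log p n ≤ n := Nat.pow_log_le_self p hn0
              have : p * p ≤ n := by
                have : p ^ 2 = p * p := by ring
                omega
              have hsq : p ≤ Nat.sqrt n := Nat.le_sqrt.mpr this
              omega
            calc p ^ (Dn n).factorization p ≤ p ^ 1 :=
                  Nat.pow_le_pow_right hpp.pos (le_trans (vDn_le_log hpp n) hlog1)
              _ = p := pow_one p
        _ ≤ primorial (n / 6) := by
            unfold primorial
            apply Finset.prod_le_prod_of_subset_of_one_le'
            · intro p hp
              simp only [Finset.mem_filter, Fp, Finset.mem_range] at hp ⊢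
              exact ⟨by omega, hp.1.1.2⟩
            · intro p hp _
              simp only [Finset.mem_filter] at hp
              exact hp.2.one_lt.le.trans' (by omega)
  · -- large primes : exponent ≤ 1
    apply Finset.prod_le_prod'
    intro p hp
    simp only [Finset.mem_filter, Fp, Finset.mem_range] at hp
    obtain ⟨⟨hpn, hpp⟩, h6⟩ := hp
    have hsqlt : Nat.sqrt n < p := lt_of_le_of_lt (sqrt_le_div6 hn) h6
    have hlog1 : Nat.log p n ≤ 1 := by
      by_contra hl
      push_neg at hl
      have h1 : p ^ 2 ≤ p ^ Nat.log p n := Nat.pow_le_pow_right hpp.pos hl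
      have h2 : p ^ Nat.log p n ≤ n := Nat.pow_log_le_self p hn0
      have h3 : p * p ≤ n := by
        have : p ^ 2 = p * p := by ring
        omega
      have hsq : p ≤ Nat.sqrt n := Nat.le_sqrt.mpr h3
      omega
    calc p ^ (Dn n).factorization p ≤ p ^ 1 :=
          Nat.pow_le_pow_right hpp.pos (le_trans (vDn_le_log hpp n) hlog1)
      _ = p := pow_one p

lemma pow_mul_factorial_le (a m : ℕ) : a ^ m * a ! ≤ (a + m)! := by
  induction m with
  | zero => simp
  | succ k ih =>
    have h1 : a ^ (k + 1) * a ! = a * (a ^ k * a !) := by ring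
    have h2 : (a + (k + 1))! = (a + k + 1) * (a + k)! := by
      rw [show a + (k + 1) = (a + k) + 1 by ring, Nat.factorial_succ]
    rw [h1, h2]
    calc a * (a ^ k * a !) ≤ a * (a + k)! := Nat.mul_le_mul_left a ih
      _ ≤ (a + k + 1) * (a + k)! := Nat.mul_le_mul_right _ (by omega)

lemma factorial_le_pow_mul (a m : ℕ) : (a + m)! ≤ (a + m) ^ m * a ! := by
  induction m with
  | zero => simp
  | succ k ih =>
    have h2 : (a + (k + 1))! = (a + k + 1) * (a + k)! := by
      rw [show a + (k + 1) = (a + k) + 1 by ring, Nat.factorial_succ]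
    rw [h2]
    calc (a + k + 1) * (a + k)!
        ≤ (a + k + 1) * ((a + k) ^ k * a !) := Nat.mul_le_mul_left _ ih
      _ ≤ (a + k + 1) * ((a + k + 1) ^ k * a !) := by
          apply Nat.mul_le_mul_left
          exact Nat.mul_le_mul_right _ (Nat.pow_le_pow_left (by omega) k)
      _ = (a + (k + 1)) ^ (k + 1) * a ! := by ring_nf
  
lemma Dn30_mul (K : ℕ) :
    Dn (30 * K) * ((15 * K)! * ((10 * K)! * (6 * K)!)) = (30 * K)! * K ! := by
  have h := Dn_mul_eq (30 * K)
  rw [show 30 * K / 2 = 15 * K by omega, show 30 * K / 3 = 10 * K by omega,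
    show 30 * K / 5 = 6 * K by omega, show 30 * K / 30 = K by omega] at h
  exact h

lemma Dn_step (K : ℕ) :
    Qc * K ^ 30 * Dn (30 * K) * (15 ^ 15 * 10 ^ 10 * 6 ^ 6 * (K + 1))
      ≤ Dn (30 * (K + 1)) * (K + 1) ^ 30 * (15 ^ 15 * 10 ^ 10 * 6 ^ 6 * (K + 1)) := by
  -- lower bound for the new numerator
  have hL : (30 * K) ^ 30 * (K + 1) * ((30 * K)! * K !) ≤ (30 * (K + 1))! * (K + 1)! := by
    have h1 : (30 * K) ^ 30 * (30 * K)! ≤ (30 * (K + 1))! := by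
      rw [show 30 * (K + 1) = 30 * K + 30 by ring]
      exact pow_mul_factorial_le (30 * K) 30
    calc (30 * K) ^ 30 * (K + 1) * ((30 * K)! * K !)
        = ((30 * K) ^ 30 * (30 * K)!) * ((K + 1) * K !) := by ring
      _ ≤ (30 * (K + 1))! * ((K + 1) * K !) := Nat.mul_le_mul_right _ h1
      _ = (30 * (K + 1))! * (K + 1)! := by rw [Nat.factorial_succ]
  -- upper bound for the new denominator
  have hR : (15 * (K + 1))! * ((10 * (K + 1))! * (6 * (K + 1))!)
      ≤ (15 * (K + 1)) ^ 15 * (10 * (K + 1)) ^ 10 * (6 * (K + 1)) ^ 6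
        * ((15 * K)! * ((10 * K)! * (6 * K)!)) := by
    have h15 : (15 * (K + 1))! ≤ (15 * (K + 1)) ^ 15 * (15 * K)! := by
      rw [show 15 * (K + 1) = 15 * K + 15 by ring]
      exact factorial_le_pow_mul (15 * K) 15
    have h10 : (10 * (K + 1))! ≤ (10 * (K + 1)) ^ 10 * (10 * K)! := by
      rw [show 10 * (K + 1) = 10 * K + 10 by ring]
      exact factorial_le_pow_mul (10 * K) 10
    have h6 : (6 * (K + 1))! ≤ (6 * (K + 1)) ^ 6 * (6 * K)! := by
      rw [show 6 * (K + 1) = 6 * K + 6 by ring]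
      exact factorial_le_pow_mul (6 * K) 6
    calc (15 * (K + 1))! * ((10 * (K + 1))! * (6 * (K + 1))!)
        ≤ ((15 * (K + 1)) ^ 15 * (15 * K)!) *
            (((10 * (K + 1)) ^ 10 * (10 * K)!) * ((6 * (K + 1)) ^ 6 * (6 * K)!)) := by
          exact Nat.mul_le_mul h15 (Nat.mul_le_mul h10 h6)
      _ = (15 * (K + 1)) ^ 15 * (10 * (K + 1)) ^ 10 * (6 * (K + 1)) ^ 6
            * ((15 * K)! * ((10 * K)! * (6 * K)!)) := by ring
  -- combine through the defining identities
  have key : Qc * K ^ 30 * Dn (30 * K) * (15 ^ 15 * 10 ^ 10 * 6 ^ 6 * (K + 1))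
        * ((15 * K)! * ((10 * K)! * (6 * K)!))
      ≤ Dn (30 * (K + 1)) * (K + 1) ^ 30 * (15 ^ 15 * 10 ^ 10 * 6 ^ 6 * (K + 1))
        * ((15 * K)! * ((10 * K)! * (6 * K)!)) := by
    calc Qc * K ^ 30 * Dn (30 * K) * (15 ^ 15 * 10 ^ 10 * 6 ^ 6 * (K + 1))
          * ((15 * K)! * ((10 * K)! * (6 * K)!))
        = (30 * K) ^ 30 * (K + 1) * (Dn (30 * K) * ((15 * K)! * ((10 * K)! * (6 * K)!))) := by
          rw [show (30 * K) ^ 30 = Qc * 15 ^ 15 * 10 ^ 10 * 6 ^ 6 * K ^ 30 by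
            rw [show (30 : ℕ) * K = 30 * K from rfl]
            rw [mul_pow]
            norm_num [Qc]]
          ring
      _ = (30 * K) ^ 30 * (K + 1) * ((30 * K)! * K !) := by rw [Dn30_mul]
      _ ≤ (30 * (K + 1))! * (K + 1)! := hL
      _ = Dn (30 * (K + 1)) * ((15 * (K + 1))! * ((10 * (K + 1))! * (6 * (K + 1))!)) :=
          (Dn30_mul (K + 1)).symm
      _ ≤ Dn (30 * (K + 1)) * ((15 * (K + 1)) ^ 15 * (10 * (K + 1)) ^ 10 * (6 * (K + 1)) ^ 6
            * ((15 * K)! * ((10 * K)! * (6 * K)!))) := Nat.mul_le_mul_left _ hR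
      _ = Dn (30 * (K + 1)) * (K + 1) ^ 30 * (15 ^ 15 * 10 ^ 10 * 6 ^ 6 * (K + 1))
            * ((15 * K)! * ((10 * K)! * (6 * K)!)) := by
          rw [mul_pow 15 (K + 1) 15, mul_pow 10 (K + 1) 10, mul_pow 6 (K + 1) 6]
          ring
  exact Nat.le_of_mul_le_mul_right key (by positivity)

lemma Dn_lower : ∀ K : ℕ, 1 ≤ K → Qc ^ (K - 1) ≤ Dn (30 * K) * K ^ 30 := by
  intro K
  induction K with
  | zero => omega
  | succ K ih =>
    intro _
    rcases Nat.eq_or_lt_of_le (show 1 ≤ K + 1 by omega) with h1 | h2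
    · -- K + 1 = 1
      have : K = 0 := by omega
      subst this
      simpa using Nat.one_le_iff_ne_zero.mpr (by have := Dn_pos 30; positivity)
    · have hK1 : 1 ≤ K := by omega
      have IH := ih hK1
      have step := Dn_step K
      have step' : Qc * K ^ 30 * Dn (30 * K) ≤ Dn (30 * (K + 1)) * (K + 1) ^ 30 :=
        Nat.le_of_mul_le_mul_right step (by positivity)
      calc Qc ^ (K + 1 - 1) = Qc * Qc ^ (K - 1) := by
            rw [← pow_succ']
            congr 1
            omega
        _ ≤ Qc * (Dn (30 * K) * K ^ 30) := Nat.mul_le_mul_left _ IH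
        _ = Qc * K ^ 30 * Dn (30 * K) := by ring
        _ ≤ Dn (30 * (K + 1)) * (K + 1) ^ 30 := step'

lemma helper1 : ∀ j : ℕ, 14 ≤ j → 30 * (j + 6) ^ 2 ≤ 4 * 2 ^ j := by
  intro j
  induction j with
  | zero => omega
  | succ k ih =>
    intro hk
    rcases Nat.lt_or_ge k 14 with h | h
    · have : k = 13 := by omega
      subst this
      norm_num
    · have IH := ih h
      have h2 : (k + 1 + 6) ^ 2 ≤ 2 * (k + 6) ^ 2 := by nlinarith
      calc 30 * (k + 1 + 6) ^ 2 ≤ 30 * (2 * (k + 6) ^ 2) := Nat.mul_le_mul_left _ h2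
        _ = 2 * (30 * (k + 6) ^ 2) := by ring
        _ ≤ 2 * (4 * 2 ^ k) := Nat.mul_le_mul_left _ IH
        _ = 4 * 2 ^ (k + 1) := by ring
  
lemma helper2 : ∀ j : ℕ, 14 ≤ j → 30 * j + 105 < 2 ^ j := by
  intro j
  induction j with
  | zero => omega
  | succ k ih =>
    intro hk
    rcases Nat.lt_or_ge k 14 with h | h
    · have : k = 13 := by omega
      subst this
      norm_num
    · have IH := ih h
      have : 2 ^ (k + 1) = 2 * 2 ^ k := by ring
      omega

lemma endgame {K : ℕ} (hK : 2 ^ 14 ≤ K) :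
    (30 * K) ^ (Nat.sqrt (30 * K)) * 4 ^ (18 * K + 18) * K ^ 30 < Qc ^ (K - 1) := by
  have hK0 : K ≠ 0 := by
    intro h
    rw [h] at hK
    norm_num at hK
  set s := Nat.sqrt (30 * K) with hs
  set l := Nat.log 2 (30 * K) with hl
  set lk := Nat.log 2 K with hlk
  have hlkK : 2 ^ lk ≤ K := Nat.pow_log_le_self 2 hK0
  have hKlt : K < 2 ^ (lk + 1) := Nat.lt_pow_succ_log_self (by norm_num) K
  have hlk14 : 14 ≤ lk := by
    have := (Nat.le_log_iff_pow_le (by norm_num) hK0).mpr hK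
    omega
  have hllk : l ≤ lk + 5 := by
    have h30 : 30 * K < 2 ^ (lk + 6) := by
      have : 2 ^ (lk + 6) = 32 * 2 ^ (lk + 1) := by ring
      omega
    have := Nat.log_lt_of_lt_pow (by positivity : 30 * K ≠ 0) h30
    omega
  have hss : s * s ≤ 30 * K := by
    have := Nat.sqrt_le' (30 * K)
    nlinarith
  -- (l+1) * s ≤ 2 * K
  have hA : (l + 1) * s ≤ 2 * K := by
    rw [← Nat.mul_self_le_mul_self_iff]
    have e1 : (l + 1) * s * ((l + 1) * s) = (l + 1) * (l + 1) * (s * s) := by ring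
    rw [e1]
    calc (l + 1) * (l + 1) * (s * s) ≤ (l + 1) * (l + 1) * (30 * K) :=
          Nat.mul_le_mul_left _ hss
      _ ≤ (lk + 6) * (lk + 6) * (30 * K) := by
          apply Nat.mul_le_mul_right
          apply Nat.mul_le_mul <;> omega
      _ = 30 * (lk + 6) ^ 2 * K := by ring
      _ ≤ 4 * 2 ^ lk * K := Nat.mul_le_mul_right _ (helper1 lk hlk14)
      _ ≤ 4 * K * K := Nat.mul_le_mul_right _ (Nat.mul_le_mul_left 4 hlkK)
      _ = 2 * K * (2 * K) := by ring
  have hB : 30 * lk + 105 < K := lt_of_lt_of_le (helper2 lk hlk14) hlkK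
  -- power of two bounds
  have h1 : (30 * K) ^ s ≤ 2 ^ ((l + 1) * s) := by
    rw [pow_mul]
    apply Nat.pow_le_pow_left
    exact le_of_lt (Nat.lt_pow_succ_log_self (by norm_num) (30 * K))
  have h2 : (4 : ℕ) ^ (18 * K + 18) = 2 ^ (36 * K + 36) := by
    rw [show (4 : ℕ) = 2 ^ 2 by norm_num, ← pow_mul]
    ring_nf
  have h3 : K ^ 30 ≤ 2 ^ (30 * (lk + 1)) := by
    calc K ^ 30 ≤ (2 ^ (lk + 1)) ^ 30 := Nat.pow_le_pow_left (le_of_lt hKlt) 30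
      _ = 2 ^ (30 * (lk + 1)) := by rw [← pow_mul, Nat.mul_comm]
  have hQ : (2 : ℕ) ^ (39 * (K - 1)) ≤ Qc ^ (K - 1) := by
    rw [pow_mul]
    apply Nat.pow_le_pow_left
    norm_num [Qc]
  have hexp : (l + 1) * s + (36 * K + 36) + 30 * (lk + 1) < 39 * (K - 1) := by
    have : 1 ≤ K := by omega
    omega
  calc (30 * K) ^ s * 4 ^ (18 * K + 18) * K ^ 30
      ≤ 2 ^ ((l + 1) * s) * 2 ^ (36 * K + 36) * 2 ^ (30 * (lk + 1)) := by
        rw [h2]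
        exact Nat.mul_le_mul (Nat.mul_le_mul h1 (le_refl _)) h3
    _ = 2 ^ ((l + 1) * s + (36 * K + 36) + 30 * (lk + 1)) := by
        rw [← pow_add, ← pow_add]
    _ < 2 ^ (39 * (K - 1)) := Nat.pow_lt_pow_right (by norm_num) hexp
    _ ≤ Qc ^ (K - 1) := hQ

lemma gap_large (x : ℕ) (hx : 1474560 ≤ x)
    (h : ∀ p : ℕ, p.Prime → ¬(x < 5 * p ∧ 3 * p ≤ x)) : False := by
  set K := x / 90 with hKdef
  have hK : 2 ^ 14 ≤ K := by
    have h1 : (16384 : ℕ) ≤ x / 90 := by omega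
    simpa using h1
  have hK1 : 1 ≤ K := by omega
  set n := 30 * K with hndef
  have hn100 : 100 ≤ n := by
    have : 16384 ≤ K := by simpa using hK
    omega
  have hd6 : n / 6 = 5 * K := by omega
  set x5 := x / 5 with hx5def
  have h5K : 5 * K ≤ x5 := by omega
  have hx5b : x5 ≤ 18 * K + 18 := by omega
  -- the large primes of `Dn n` all fit under `x5`
  have hWsub : (Fp n).filter (fun p => n / 6 < p) ⊆ (Fp x5).filter (fun p => 5 * K < p) := by
    intro p hp
    simp only [Finset.mem_filter, Fp, Finset.mem_range] at hp ⊢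
    obtain ⟨⟨hpn, hpp⟩, hp6⟩ := hp
    rw [hd6] at hp6
    have h3p : 3 * p ≤ x := by omega
    have h5p : ¬ (x < 5 * p ∧ 3 * p ≤ x) := h p hpp
    have hpx5 : 5 * p ≤ x := by
      by_contra hc
      exact h5p ⟨by omega, h3p⟩
    exact ⟨⟨by omega, hpp⟩, hp6⟩
  have hW : (∏ p ∈ (Fp n).filter (fun p => n / 6 < p), p)
      ≤ ∏ p ∈ (Fp x5).filter (fun p => 5 * K < p), p := by
    apply Finset.prod_le_prod_of_subset_of_one_le' hWsub
    intro p hp _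
    simp only [Finset.mem_filter, Fp, Finset.mem_range] at hp
    exact hp.1.2.one_lt.le.trans' (by omega)
  rw [hd6] at hWsub hW
  have hsplit : primorial (5 * K) * (∏ p ∈ (Fp x5).filter (fun p => 5 * K < p), p)
      = primorial x5 := by
    have hPeq : (Fp x5).filter (fun p => ¬ 5 * K < p) = Fp (5 * K) := by
      apply Finset.ext
      intro p
      simp only [Finset.mem_filter, Fp, Finset.mem_range]
      constructor
      · rintro ⟨⟨h1, h2⟩, h3⟩
        exact ⟨by omega, h2⟩
      · rintro ⟨h1, h2⟩
        exact ⟨⟨by omega, h2⟩, by omega⟩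
    have := Finset.prod_filter_mul_prod_filter_not (Fp x5) (fun p => 5 * K < p) (fun p => p)
    rw [hPeq] at this
    rw [mul_comm] at this
    calc primorial (5 * K) * (∏ p ∈ (Fp x5).filter (fun p => 5 * K < p), p)
        = (∏ p ∈ Fp (5 * K), p) * (∏ p ∈ (Fp x5).filter (fun p => 5 * K < p), p) := rfl
      _ = ∏ p ∈ Fp x5, p := by rw [mul_comm]; rw [← this]; ring
      _ = primorial x5 := rfl
  have hchain : Qc ^ (K - 1) ≤ n ^ Nat.sqrt n * 4 ^ (18 * K + 18) * K ^ 30 := by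
    calc Qc ^ (K - 1) ≤ Dn n * K ^ 30 := Dn_lower K hK1
      _ ≤ (n ^ Nat.sqrt n * ((primorial (n / 6)) *
            ∏ p ∈ (Fp n).filter (fun p => n / 6 < p), p)) * K ^ 30 :=
          Nat.mul_le_mul_right _ (Dn_le_split n hn100)
      _ ≤ (n ^ Nat.sqrt n * (primorial x5)) * K ^ 30 := by
          apply Nat.mul_le_mul_right
          apply Nat.mul_le_mul_left
          rw [hd6, ← hsplit]
          exact Nat.mul_le_mul_left _ hW
      _ ≤ (n ^ Nat.sqrt n * 4 ^ x5) * K ^ 30 := by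
          apply Nat.mul_le_mul_right
          exact Nat.mul_le_mul_left _ (primorial_le_4_pow x5)
      _ ≤ (n ^ Nat.sqrt n * 4 ^ (18 * K + 18)) * K ^ 30 := by
          apply Nat.mul_le_mul_right
          exact Nat.mul_le_mul_left _ (Nat.pow_le_pow_right (by norm_num) hx5b)
      _ = n ^ Nat.sqrt n * 4 ^ (18 * K + 18) * K ^ 30 := by ring
  have := endgame hK
  rw [← hndef] at this
  omega


lemma gap_small (x : ℕ) (h15 : 15 ≤ x) (hup : x < 1474560) :
    ∃ p : ℕ, p.Prime ∧ x < 5 * p ∧ 3 * p ≤ x := by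
  by_cases h0 : x < 21
  · exact ⟨5, by norm_num, by omega, by omega⟩
  by_cases h1 : x < 33
  · exact ⟨7, by norm_num, by omega, by omega⟩
  by_cases h2 : x < 51
  · exact ⟨11, by norm_num, by omega, by omega⟩
  by_cases h3 : x < 69
  · exact ⟨17, by norm_num, by omega, by omega⟩
  by_cases h4 : x < 111
  · exact ⟨23, by norm_num, by omega, by omega⟩
  by_cases h5 : x < 183
  · exact ⟨37, by norm_num, by omega, by omega⟩
  by_cases h6 : x < 303
  · exact ⟨61, by norm_num, by omega, by omega⟩
  by_cases h7 : x < 501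
  · exact ⟨101, by norm_num, by omega, by omega⟩
  by_cases h8 : x < 831
  · exact ⟨167, by norm_num, by omega, by omega⟩
  by_cases h9 : x < 1383
  · exact ⟨277, by norm_num, by omega, by omega⟩
  by_cases h10 : x < 2283
  · exact ⟨461, by norm_num, by omega, by omega⟩
  by_cases h11 : x < 3777
  · exact ⟨761, by norm_num, by omega, by omega⟩
  by_cases h12 : x < 6267
  · exact ⟨1259, by norm_num, by omega, by omega⟩
  by_cases h13 : x < 10407
  · exact ⟨2089, by norm_num, by omega, by omega⟩
  by_cases h14 : x < 17337
  · exact ⟨3469, by norm_num, by omega, by omega⟩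
  by_cases h15 : x < 28893
  · exact ⟨5779, by norm_num, by omega, by omega⟩
  by_cases h16 : x < 48099
  · exact ⟨9631, by norm_num, by omega, by omega⟩
  by_cases h17 : x < 80151
  · exact ⟨16033, by norm_num, by omega, by omega⟩
  by_cases h18 : x < 133557
  · exact ⟨26717, by norm_num, by omega, by omega⟩
  by_cases h19 : x < 222591
  · exact ⟨44519, by norm_num, by omega, by omega⟩
  by_cases h20 : x < 370983
  · exact ⟨74197, by norm_num, by omega, by omega⟩
  by_cases h21 : x < 618249
  · exact ⟨123661, by norm_num, by omega, by omega⟩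
  by_cases h22 : x < 1030299
  · exact ⟨206083, by norm_num, by omega, by omega⟩
  by_cases h23 : x < 1717161
  · exact ⟨343433, by norm_num, by omega, by omega⟩
  · exact ⟨572387, by norm_num, by omega, by omega⟩

lemma gap (x : ℕ) (h15 : 15 ≤ x) : ∃ p : ℕ, p.Prime ∧ x < 5 * p ∧ 3 * p ≤ x := by
  by_cases h : x < 1474560
  · exact gap_small x h15 h
  · by_contra hc
    push_neg at hc
    apply gap_large x (by omega)
    intro p pp hpc
    have := hc p pp hpc.1
    omega

lemma not_sq (n : ℕ) (hn : 1 ≤ n) :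
    ¬ ∃ m : ℕ, (∏ i ∈ Finset.Icc 1 n, (4 * i + 1)) = m ^ 2 := by
  rcases Nat.lt_or_ge n 4 with hsmall | hbig
  · interval_cases n
    · rintro ⟨m, hm⟩
      have h1 : (∏ i ∈ Finset.Icc 1 1, (4 * i + 1)) = 5 := by decide
      rw [h1] at hm
      have : m ≤ 3 := by nlinarith
      interval_cases m <;> omega
    · rintro ⟨m, hm⟩
      have h1 : (∏ i ∈ Finset.Icc 1 2, (4 * i + 1)) = 45 := by decide
      rw [h1] at hm
      have : m ≤ 7 := by nlinarith
      interval_cases m <;> omega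
    · rintro ⟨m, hm⟩
      have h1 : (∏ i ∈ Finset.Icc 1 3, (4 * i + 1)) = 585 := by decide
      rw [h1] at hm
      have : m ≤ 25 := by nlinarith
      interval_cases m <;> omega
  · rintro ⟨m, hm⟩
    obtain ⟨p, pp, hx5, hx3⟩ := gap (4 * n + 1) (by omega)
    have hp4 : p ≠ 4 := by
      intro h4
      rw [h4] at pp
      norm_num at pp
    have hp5 : 5 ≤ p := by
      have h2 := pp.two_le
      have h3 : p ≠ 2 := by
        intro h
        omega
      have h3' : p ≠ 3 := by
        intro h
        omega
      omega
    have hpodd : p % 2 = 1 := Nat.odd_iff.mp (pp.odd_of_ne_two (by omega))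
    -- choose the term index j : the unique i with p ∣ 4 i + 1
    obtain ⟨c₀, hc₀, hc₀p⟩ : ∃ c₀, (c₀ = 1 ∨ c₀ = 3) ∧ (c₀ * p) % 4 = 1 := by
      rcases Nat.lt_or_ge (p % 4) 2 with h | h
      · exact ⟨1, Or.inl rfl, by omega⟩
      · exact ⟨3, Or.inr rfl, by omega⟩
    obtain ⟨j, hj⟩ : ∃ j, c₀ * p = 4 * j + 1 := ⟨(c₀ * p) / 4, by omega⟩
    have hj1 : 1 ≤ j := by rcases hc₀ with rfl | rfl <;> omega
    have hjn : j ≤ n := by rcases hc₀ with rfl | rfl <;> omega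
    have hfac : (∏ i ∈ Finset.Icc 1 n, (4 * i + 1)).factorization p
        = ∑ i ∈ Finset.Icc 1 n, (4 * i + 1).factorization p := by
      rw [Nat.factorization_prod (fun i _ => by positivity)]
      simp [Finset.sum_apply']
    have hterm : ∀ i ∈ Finset.Icc 1 n, (4 * i + 1).factorization p
        = if i = j then 1 else 0 := by
      intro i hi
      simp only [Finset.mem_Icc] at hi
      by_cases hij : i = j
      · subst hij
        rw [if_pos rfl, ← hj, Nat.factorization_mul (by omega) (by omega)]
        simp only [Finsupp.add_apply]
        rw [Nat.factorization_eq_zero_of_lt (by omega), pp.factorization_self]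
      · rw [if_neg hij]
        rw [Nat.factorization_eq_zero_iff]
        right; left
        intro hdvd
        obtain ⟨c, hc⟩ := hdvd
        have hcle : c ≤ 4 := by
          by_contra hc5
          have h5c : 5 * p ≤ p * c := by
            calc 5 * p = p * 5 := by ring
              _ ≤ p * c := Nat.mul_le_mul_left p (by omega)
          have : 4 * i + 1 ≤ 4 * n + 1 := by omega
          omega
        have hc0 : c ≠ 0 := by
          rintro rfl
          omega
        have hcodd : c % 2 = 1 := by
          rcases Nat.even_or_odd c with ⟨t, rfl⟩ | ho
          · exfalso
            have ht2 : p * (t + t) = 2 * (p * t) := by ring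
            omega
          · obtain ⟨t, rfl⟩ := ho
            omega
        have hcomm : p * c = c * p := by ring
        have hcmod : (c * p) % 4 = 1 := by omega
        have hcc : c = 1 ∨ c = 3 := by omega
        -- show c = c₀, contradicting i ≠ j
        have hceq : c = c₀ := by
          rcases hcc with rfl | rfl <;> rcases hc₀ with rfl | rfl
          · rfl
          · -- c = 1, c₀ = 3 : p % 4 = 1 from hcmod, but 3 p % 4 = 1 forces p % 4 = 3
            exfalso
            omega
          · exfalso
            omega
          · rfl
        rw [hceq] at hc hcomm
        omega
    have hv1 : (∏ i ∈ Finset.Icc 1 n, (4 * i + 1)).factorization p = 1 := by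
      rw [hfac, Finset.sum_congr rfl hterm, Finset.sum_ite_eq' _ j]
      simp [Finset.mem_Icc, hj1, hjn]
    have heven : (∏ i ∈ Finset.Icc 1 n, (4 * i + 1)).factorization p
        = 2 * m.factorization p := by
      rw [hm, Nat.factorization_pow]
      simp [mul_comm]
    omega

lemma shift_prod (n : ℕ) :
    (∏ i ∈ Finset.Icc 1 (n + 1), (4 * i - 3)) = ∏ i ∈ Finset.Icc 1 n, (4 * i + 1) := by
  induction n with
  | zero => simp
  | succ k ih =>
    rw [Finset.prod_Icc_succ_top (by omega : 1 ≤ k + 1 + 1), ih,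
      Finset.prod_Icc_succ_top (by omega : 1 ≤ k + 1)]
    congr 1

theorem product_four_i_minus_three_and_plus_one_not_square (n : ℕ) :
    (2 ≤ n → ¬ ∃ m : ℕ, (∏ i ∈ Finset.Icc 1 n, (4 * i - 3)) = m ^ 2) ∧
    (1 ≤ n → ¬ ∃ m : ℕ, (∏ i ∈ Finset.Icc 1 n, (4 * i + 1)) = m ^ 2) := by
  constructor
  · intro h2
    obtain ⟨k, rfl⟩ : ∃ k, n = k + 1 := ⟨n - 1, by omega⟩
    rw [shift_prod]
    exact not_sq k (by omega)
  · exact not_sq n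
end

section
/- Let p ≥ 11 be a prime. Then there exists a prime q with p < q < 4p/3. -/
namespace NaguraAux
open Nat Finset Real



def Np (n : ℕ) : ℕ := n ! * (n / 30)!
def Dp (n : ℕ) : ℕ := (n / 2)! * ((n / 3)! * (n / 5)!)
def Psi (n : ℕ) : ℕ := ∏ p ∈ (range (n + 1)).filter Nat.Prime, p ^ Nat.log p n

lemma Np_pos (n : ℕ) : 0 < Np n := Nat.mul_pos n.factorial_pos (n / 30).factorial_pos
lemma Dp_pos (n : ℕ) : 0 < Dp n :=
  Nat.mul_pos (n / 2).factorial_pos (Nat.mul_pos (n / 3).factorial_pos (n / 5).factorial_pos)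
lemma Psi_pos (n : ℕ) : 0 < Psi n :=
  Finset.prod_pos fun p hp => pow_pos (mem_filter.mp hp).2.pos _

lemma val_fac {p : ℕ} (hp : p.Prime) (n b : ℕ) (hb : Nat.log p n < b) :
    (n !).factorization p = ∑ i ∈ Finset.Ico 1 b, n / p ^ i := by
  haveI := Fact.mk hp
  rw [Nat.factorization_def _ hp]
  exact padicValNat_factorial hb

lemma log_div_le (p n k : ℕ) : Nat.log p (n / k) ≤ Nat.log p n :=
  Nat.log_mono_right (Nat.div_le_self n k)

/-- valuation of `Np n` as a Legendre sum -/
lemma val_Np {p : ℕ} (hp : p.Prime) (n b : ℕ) (hb : Nat.log p n < b) :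
    (Np n).factorization p = ∑ i ∈ Finset.Ico 1 b, (n / p ^ i + n / p ^ i / 30) := by
  rw [Np, Nat.factorization_mul n.factorial_ne_zero (n / 30).factorial_ne_zero]
  have h30 : ∀ i, n / 30 / p ^ i = n / p ^ i / 30 := by
    intro i; rw [Nat.div_div_eq_div_mul, Nat.div_div_eq_div_mul, Nat.mul_comm]
  simp only [Finsupp.add_apply, val_fac hp n b hb,
    val_fac hp (n / 30) b (lt_of_le_of_lt (log_div_le p n 30) hb), ← Finset.sum_add_distrib, h30]

lemma val_Dp {p : ℕ} (hp : p.Prime) (n b : ℕ) (hb : Nat.log p n < b) :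
    (Dp n).factorization p
      = ∑ i ∈ Finset.Ico 1 b, (n / p ^ i / 2 + (n / p ^ i / 3 + n / p ^ i / 5)) := by
  rw [Dp, Nat.factorization_mul (n / 2).factorial_ne_zero
    (Nat.mul_ne_zero (n / 3).factorial_ne_zero (n / 5).factorial_ne_zero),
    Nat.factorization_mul (n / 3).factorial_ne_zero (n / 5).factorial_ne_zero]
  have h : ∀ k i : ℕ, n / k / p ^ i = n / p ^ i / k := by
    intro k i; rw [Nat.div_div_eq_div_mul, Nat.div_div_eq_div_mul, Nat.mul_comm]
  simp only [Finsupp.add_apply, val_fac hp (n / 2) b (lt_of_le_of_lt (log_div_le p n 2) hb),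
    val_fac hp (n / 3) b (lt_of_le_of_lt (log_div_le p n 3) hb),
    val_fac hp (n / 5) b (lt_of_le_of_lt (log_div_le p n 5) hb),
    ← Finset.sum_add_distrib, h]

lemma val_primorial {p : ℕ} (hp : p.Prime) (n : ℕ) :
    (primorial n).factorization p = if p ≤ n then 1 else 0 := by
  rw [primorial, Nat.factorization_prod (fun q hq => (mem_filter.mp hq).2.ne_zero)]
  rw [Finset.sum_apply']
  have : ∀ q ∈ (range (n + 1)).filter Nat.Prime,
      (Nat.factorization q) p = if q = p then 1 else 0 := by
    intro q hq
    rw [(mem_filter.mp hq).2.factorization]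
    simp [Finsupp.single_apply]
  rw [Finset.sum_congr rfl this, Finset.sum_ite_eq' _ p (fun _ => 1)]
  simp only [mem_filter, mem_range]
  by_cases h : p ≤ n
  · simp [h, Nat.lt_succ_iff, hp]
  · simp [h, Nat.lt_succ_iff]

lemma val_Psi {p : ℕ} (hp : p.Prime) (n : ℕ) :
    (Psi n).factorization p = if p ≤ n then Nat.log p n else 0 := by
  rw [Psi, Nat.factorization_prod (fun q hq => pow_ne_zero _ (mem_filter.mp hq).2.ne_zero)]
  rw [Finset.sum_apply']
  have : ∀ q ∈ (range (n + 1)).filter Nat.Prime,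
      (Nat.factorization (q ^ Nat.log q n)) p = if q = p then Nat.log p n else 0 := by
    intro q hq
    rw [Nat.factorization_pow, (mem_filter.mp hq).2.factorization]
    simp only [Finsupp.smul_apply, Finsupp.single_apply, smul_eq_mul]
    by_cases h : q = p <;> simp [h]
  rw [Finset.sum_congr rfl this, Finset.sum_ite_eq' _ p (fun _ => Nat.log p n)]
  simp only [mem_filter, mem_range]
  by_cases h : p ≤ n
  · simp [h, Nat.lt_succ_iff, hp]
  · simp [h, Nat.lt_succ_iff]



-- assume part1 contents; re-declare minimal: (we'll concatenate later)
/-- (L1) -/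
lemma Np_dvd (n : ℕ) (hn : 0 < n) : Np n ∣ Dp n * Psi n := by
  rw [← Nat.factorization_le_iff_dvd (Np_pos n).ne' (Nat.mul_pos (Dp_pos n) (Psi_pos n)).ne']
  intro p
  by_cases hp : p.Prime
  · rw [Nat.factorization_mul (Dp_pos n).ne' (Psi_pos n).ne', Finsupp.add_apply,
      val_Np hp n (Nat.log p n + 1) (by omega), val_Dp hp n (Nat.log p n + 1) (by omega), val_Psi hp n]
    by_cases hpn : p ≤ n
    · simp only [if_pos hpn]
      calc ∑ i ∈ Finset.Ico 1 (Nat.log p n + 1), (n / p ^ i + n / p ^ i / 30)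
          ≤ ∑ i ∈ Finset.Ico 1 (Nat.log p n + 1),
              ((n / p ^ i / 2 + (n / p ^ i / 3 + n / p ^ i / 5)) + 1) :=
            Finset.sum_le_sum fun i _ => by omega
        _ = ∑ i ∈ Finset.Ico 1 (Nat.log p n + 1),
              (n / p ^ i / 2 + (n / p ^ i / 3 + n / p ^ i / 5)) + Nat.log p n := by
            rw [Finset.sum_add_distrib, Finset.sum_const, Nat.card_Ico, smul_eq_mul]
            omega
    · have h1 : Nat.log p n = 0 := Nat.log_eq_zero_iff.mpr (Or.inl (by omega))
      simp [h1]
  · simp [Nat.factorization_eq_zero_of_not_prime _ hp]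

/-- (L2) -/
lemma Dp_primorial_dvd (n : ℕ) (hn : 0 < n) :
    Dp n * primorial n ∣ Np n * primorial (n / 6) := by
  rw [← Nat.factorization_le_iff_dvd (Nat.mul_pos (Dp_pos n) (primorial_pos n)).ne'
    (Nat.mul_pos (Np_pos n) (primorial_pos (n / 6))).ne']
  intro p
  by_cases hp : p.Prime
  · rw [Nat.factorization_mul (Dp_pos n).ne' (primorial_pos n).ne',
      Nat.factorization_mul (Np_pos n).ne' (primorial_pos (n / 6)).ne',
      Finsupp.add_apply, Finsupp.add_apply,
      val_Np hp n (Nat.log p n + 1) (by omega), val_Dp hp n (Nat.log p n + 1) (by omega),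
      val_primorial hp n, val_primorial hp (n / 6)]
    by_cases hp6 : p ≤ n / 6
    · have hpn : p ≤ n := le_trans hp6 (Nat.div_le_self n 6)
      simp only [if_pos hp6, if_pos hpn]
      have hle : ∑ i ∈ Finset.Ico 1 (Nat.log p n + 1),
          (n / p ^ i / 2 + (n / p ^ i / 3 + n / p ^ i / 5))
          ≤ ∑ i ∈ Finset.Ico 1 (Nat.log p n + 1), (n / p ^ i + n / p ^ i / 30) :=
        Finset.sum_le_sum fun i _ => by omega
      omega
    · by_cases hpn : p ≤ n
      · -- n/6 < p ≤ n : strict inequality on sums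
        simp only [if_pos hpn, if_neg hp6]
        have hstrict : ∑ i ∈ Finset.Ico 1 (Nat.log p n + 1),
            (n / p ^ i / 2 + (n / p ^ i / 3 + n / p ^ i / 5))
            < ∑ i ∈ Finset.Ico 1 (Nat.log p n + 1), (n / p ^ i + n / p ^ i / 30) := by
          refine Finset.sum_lt_sum (fun i _ => by omega) ⟨1, ?_, ?_⟩
          · have : 1 ≤ Nat.log p n := Nat.log_pos hp.one_lt hpn
            exact Finset.mem_Ico.mpr ⟨le_refl 1, by omega⟩
          · have h1 : 1 ≤ n / p := Nat.one_le_div_iff hp.pos |>.mpr hpn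
            have h5 : n / p < 6 := Nat.div_lt_of_lt_mul (by omega)
            simp only [pow_one]
            omega
        omega
      · -- p > n : everything vanishes
        have h1 : Nat.log p n = 0 := Nat.log_eq_zero_iff.mpr (Or.inl (by omega))
        simp [h1, hpn, hp6]
  · simp [Nat.factorization_eq_zero_of_not_prime _ hp]

/-- (L3) -/
lemma Psi_le (n : ℕ) (hn : 0 < n) : Psi n ≤ primorial n * n ^ Nat.sqrt n := by
  have h1 : Psi n = (∏ p ∈ (range (n + 1)).filter Nat.Prime, p ^ (Nat.log p n - 1))
      * primorial n := by
    rw [Psi, primorial, ← Finset.prod_mul_distrib]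
    refine Finset.prod_congr rfl fun p hp => ?_
    obtain ⟨hr, hpp⟩ := mem_filter.mp hp
    have hpn : p ≤ n := Nat.lt_succ_iff.mp (mem_range.mp hr)
    have hl : 1 ≤ Nat.log p n := Nat.log_pos hpp.one_lt hpn
    rw [← pow_succ]
    congr 1
    omega
  rw [h1, Nat.mul_comm]
  refine Nat.mul_le_mul_left _ ?_
  -- the product of p^(log-1) over primes ≤ n is at most n^(sqrt n)
  have h2 : ∀ p ∈ (range (n + 1)).filter Nat.Prime,
      p ^ (Nat.log p n - 1) ≤ if p * p ≤ n then n else 1 := by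
    intro p hp
    obtain ⟨hr, hpp⟩ := mem_filter.mp hp
    by_cases hsq : p * p ≤ n
    · simp only [if_pos hsq]
      calc p ^ (Nat.log p n - 1) ≤ p ^ Nat.log p n :=
            Nat.pow_le_pow_right hpp.pos (by omega)
        _ ≤ n := Nat.pow_log_le_self p hn.ne'
    · simp only [if_neg hsq]
      have : Nat.log p n ≤ 1 := by
        by_contra hc
        push_neg at hc
        have := Nat.pow_le_of_le_log hn.ne' (by omega : 2 ≤ Nat.log p n)
        simp [pow_two] at this
        omega
      have : Nat.log p n - 1 = 0 := by omega
      simp [this]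
  calc (∏ p ∈ (range (n + 1)).filter Nat.Prime, p ^ (Nat.log p n - 1))
      ≤ ∏ p ∈ (range (n + 1)).filter Nat.Prime, (if p * p ≤ n then n else 1) :=
        Finset.prod_le_prod (fun _ _ => Nat.zero_le _) h2
    _ = ∏ p ∈ ((range (n + 1)).filter Nat.Prime).filter (fun p => p * p ≤ n), n := by
        rw [Finset.filter_filter, Finset.prod_filter, Finset.prod_filter]
        exact Finset.prod_congr rfl fun p _ => by
          by_cases h1 : Nat.Prime p <;> by_cases h2 : p * p ≤ n <;> simp [h1, h2]
    _ ≤ n ^ Nat.sqrt n := by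
        rw [Finset.prod_const]
        refine Nat.pow_le_pow_right hn ?_
        calc (((range (n + 1)).filter Nat.Prime).filter (fun p => p * p ≤ n)).card
            ≤ (Finset.Ico 2 (Nat.sqrt n + 1)).card := by
              refine Finset.card_le_card fun p hp => ?_
              obtain ⟨hp1, hp2⟩ := mem_filter.mp hp
              obtain ⟨_, hpp⟩ := mem_filter.mp hp1
              refine Finset.mem_Ico.mpr ⟨hpp.two_le, ?_⟩
              have := Nat.le_sqrt.mpr hp2
              omega
          _ ≤ Nat.sqrt n := by rw [Nat.card_Ico]; omega
    




lemma sqrtpi_le_stirlingSeq (n : ℕ) : Real.sqrt π ≤ Stirling.stirlingSeq (n + 1) := by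
  have ht : Filter.Tendsto (Stirling.stirlingSeq ∘ Nat.succ) Filter.atTop (nhds (Real.sqrt π)) :=
    Stirling.tendsto_stirlingSeq_sqrt_pi.comp (Filter.tendsto_add_atTop_nat 1)
  exact Stirling.stirlingSeq'_antitone.le_of_tendsto ht n

lemma stirling_lower (n : ℕ) (hn : 1 ≤ n) : ((n : ℝ) / Real.exp 1) ^ n ≤ (n ! : ℝ) := by
  obtain ⟨m, rfl⟩ := Nat.exists_eq_add_of_le hn
  have h := sqrtpi_le_stirlingSeq m
  rw [Stirling.stirlingSeq] at h
  have hd : 0 < Real.sqrt (2 * (1 + m : ℕ) : ℝ) * (((1 + m : ℕ) : ℝ) / Real.exp 1) ^ (1 + m) := by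
    have : (0:ℝ) < ((1 + m : ℕ) : ℝ) := by positivity
    positivity
  have hsp : (1:ℝ) ≤ Real.sqrt π := by
    rw [show (1:ℝ) = Real.sqrt 1 by simp]
    exact Real.sqrt_le_sqrt (by linarith [Real.pi_gt_three])
  have hs2 : (1:ℝ) ≤ Real.sqrt (2 * (1 + m : ℕ) : ℝ) := by
    rw [show (1:ℝ) = Real.sqrt 1 by simp]
    refine Real.sqrt_le_sqrt ?_
    have : (1:ℝ) ≤ ((1 + m : ℕ) : ℝ) := by exact_mod_cast Nat.le_add_right 1 m
    linarith
  rw [Nat.add_comm 1 m] at *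
  have h' := (le_div_iff₀ hd).mp h
  nlinarith [pow_pos (show (0:ℝ) < ((m + 1 : ℕ) : ℝ) / Real.exp 1 by positivity) (m + 1),
    Real.sqrt_nonneg (2 * ((m + 1 : ℕ) : ℝ))]

lemma stirling_upper (n : ℕ) (hn : 1 ≤ n) :
    (n ! : ℝ) ≤ Real.exp 1 * Real.sqrt n * ((n : ℝ) / Real.exp 1) ^ n := by
  obtain ⟨m, rfl⟩ := Nat.exists_eq_add_of_le hn
  have h : Stirling.stirlingSeq (m + 1) ≤ Stirling.stirlingSeq 1 :=
    Stirling.stirlingSeq'_antitone (Nat.zero_le m)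
  rw [Stirling.stirlingSeq_one, Stirling.stirlingSeq] at h
  have hd : 0 < Real.sqrt (2 * (m + 1 : ℕ) : ℝ) * (((m + 1 : ℕ) : ℝ) / Real.exp 1) ^ (m + 1) := by
    have : (0:ℝ) < ((m + 1 : ℕ) : ℝ) := by positivity
    positivity
  rw [Nat.add_comm 1 m] at *
  rw [div_le_div_iff₀ hd (by positivity : (0:ℝ) < Real.sqrt 2)] at h
  have hkey : Real.sqrt (2 * (m + 1 : ℕ) : ℝ) = Real.sqrt 2 * Real.sqrt ((m + 1 : ℕ) : ℝ) := by
    rw [← Real.sqrt_mul (by norm_num)]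
  rw [hkey] at h
  have h'' : ((m + 1)! : ℝ) * Real.sqrt 2 ≤
      (Real.exp 1 * Real.sqrt ((m + 1 : ℕ) : ℝ) * (((m + 1 : ℕ) : ℝ) / Real.exp 1) ^ (m + 1))
        * Real.sqrt 2 := le_of_le_of_eq h (by ring)
  exact le_of_mul_le_mul_right h'' (Real.sqrt_pos.mpr two_pos)

lemma stirling_log_lower (n : ℕ) (hn : 1 ≤ n) :
    (n : ℝ) * (Real.log n - 1) ≤ Real.log (n !) := by
  have h := stirling_lower n hn
  have hx : (0:ℝ) < (n : ℝ) := by exact_mod_cast hn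
  have h2 := Real.log_le_log (by positivity) h
  rw [Real.log_pow, Real.log_div hx.ne' (Real.exp_ne_zero 1), Real.log_exp] at h2
  linarith

lemma stirling_log_upper (n : ℕ) (hn : 1 ≤ n) :
    Real.log (n !) ≤ 1 + Real.log n + (n : ℝ) * (Real.log n - 1) := by
  have h := stirling_upper n hn
  have hx : (0:ℝ) < (n : ℝ) := by exact_mod_cast hn
  have h2 := Real.log_le_log (by exact_mod_cast n.factorial_pos) h
  rw [Real.log_mul (by positivity) (by positivity),
    Real.log_mul (Real.exp_ne_zero 1) (Real.sqrt_pos.mpr hx).ne', Real.log_exp, Real.log_pow,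
    Real.log_div hx.ne' (Real.exp_ne_zero 1), Real.log_exp] at h2
  have hs : Real.log (Real.sqrt n) ≤ Real.log n := by
    refine Real.log_le_log (Real.sqrt_pos.mpr hx) ?_
    nlinarith [Real.sq_sqrt hx.le, Real.sqrt_nonneg ((n:ℝ)), Real.sqrt_le_sqrt
      (show (1:ℝ) ≤ (n:ℝ) from by exact_mod_cast hn), Real.sqrt_one]
  linarith




/-- G(x) = x log x - x is monotone on [1, ∞) -/
lemma Gmono {x y : ℝ} (hx : 1 ≤ x) (hxy : x ≤ y) :
    x * Real.log x - x ≤ y * Real.log y - y := by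
  have hx0 : (0:ℝ) < x := by linarith
  have hy0 : (0:ℝ) < y := by linarith
  have h := Real.log_le_sub_one_of_pos (show (0:ℝ) < x / y by positivity)
  rw [Real.log_div hx0.ne' hy0.ne'] at h
  have hlx : 0 ≤ Real.log x := Real.log_nonneg hx
  have e1 : y * (Real.log x - Real.log y) ≤ x - y := by
    have := mul_le_mul_of_nonneg_left h hy0.le
    have he : y * (x / y - 1) = x - y := by field_simp
    linarith
  have e2 : x * Real.log x ≤ y * Real.log x := mul_le_mul_of_nonneg_right hxy hlx
  nlinarith

/-- step bound: G(y) ≤ G(x) + log y when x ≤ y ≤ x + 1 -/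
lemma Gstep {x y : ℝ} (hx : 0 < x) (hy1 : 1 ≤ y) (hxy : x ≤ y) (hyx : y ≤ x + 1) :
    y * Real.log y - y ≤ x * Real.log x - x + Real.log y := by
  have hy0 : (0:ℝ) < y := by linarith
  have h := Real.log_le_sub_one_of_pos (show (0:ℝ) < y / x by positivity)
  rw [Real.log_div hy0.ne' hx.ne'] at h
  have hly : 0 ≤ Real.log y := Real.log_nonneg hy1
  have e1 : x * (Real.log y - Real.log x) ≤ y - x := by
    have := mul_le_mul_of_nonneg_left h hx.le
    have he : x * (y / x - 1) = y - x := by field_simp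
    linarith
  have e2 : (y - x) * Real.log y ≤ 1 * Real.log y :=
    mul_le_mul_of_nonneg_right (by linarith) hly
  nlinarith

lemma log2_lo : (0.6931471803 : ℝ) ≤ Real.log 2 := le_of_lt Real.log_two_gt_d9
lemma log2_hi : Real.log 2 ≤ (0.6931471808 : ℝ) := le_of_lt Real.log_two_lt_d9

lemma log3_lo : (1.0985728 : ℝ) ≤ Real.log 3 := by
  have hp : (2:ℝ) ^ (84:ℕ) ≤ 3 ^ (53:ℕ) := by norm_num
  have h := Real.log_le_log (by positivity) hp
  rw [Real.log_pow, Real.log_pow] at h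
  norm_num at h
  nlinarith [log2_lo]

lemma log3_hi : Real.log 3 ≤ (1.0986157 : ℝ) := by
  have hp : (3:ℝ) ^ (306:ℕ) ≤ 2 ^ (485:ℕ) := by
    rw [show (306:ℕ) = 153 * 2 from rfl, show (485:ℕ) = 242 * 2 + 1 from rfl, pow_succ (2:ℝ) (242 * 2),
      pow_mul (3:ℝ) 153 2, pow_mul (2:ℝ) 242 2]
    norm_num
  have h := Real.log_le_log (by positivity) hp
  rw [Real.log_pow, Real.log_pow] at h
  norm_num at h
  nlinarith [log2_hi]

lemma log5_lo : (1.6093762 : ℝ) ≤ Real.log 5 := by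
  have hp : (2:ℝ) ^ (202:ℕ) ≤ 5 ^ (87:ℕ) := by norm_num
  have h := Real.log_le_log (by positivity) hp
  rw [Real.log_pow, Real.log_pow] at h
  norm_num at h
  nlinarith [log2_lo]

lemma log5_hi : Real.log 5 ≤ (1.6095113 : ℝ) := by
  have hp : (5:ℝ) ^ (59:ℕ) ≤ 2 ^ (137:ℕ) := by norm_num
  have h := Real.log_le_log (by positivity) hp
  rw [Real.log_pow, Real.log_pow] at h
  norm_num at h
  nlinarith [log2_hi]

/-- the Nagura constant -/
noncomputable def Acon : ℝ := (7/15) * Real.log 2 + (3/10) * Real.log 3 + (1/6) * Real.log 5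

lemma Acon_lo : (0.92126 : ℝ) ≤ Acon := by
  have := log2_lo; have := log3_lo; have := log5_lo; rw [Acon]; nlinarith

lemma Acon_hi : Acon ≤ (0.92131 : ℝ) := by
  have := log2_hi; have := log3_hi; have := log5_hi; rw [Acon]; nlinarith

/-- the key exact identity for G-combination -/
lemma Gsum (x : ℝ) (hx : 0 < x) :
    x * Real.log x - x + ((x/30) * Real.log (x/30) - x/30)
      - ((x/2) * Real.log (x/2) - x/2) - ((x/3) * Real.log (x/3) - x/3)
      - ((x/5) * Real.log (x/5) - x/5) = Acon * x := by
  have l30 : Real.log (30 : ℝ) = Real.log 2 + Real.log 3 + Real.log 5 := by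
    rw [show (30:ℝ) = 2 * 3 * 5 by norm_num,
      Real.log_mul (by positivity) (by norm_num), Real.log_mul (by norm_num) (by norm_num)]
  have h2 : Real.log (x/2) = Real.log x - Real.log 2 := Real.log_div hx.ne' (by norm_num)
  have h3 : Real.log (x/3) = Real.log x - Real.log 3 := Real.log_div hx.ne' (by norm_num)
  have h5 : Real.log (x/5) = Real.log x - Real.log 5 := Real.log_div hx.ne' (by norm_num)
  have h30 : Real.log (x/30) = Real.log x - Real.log 30 := Real.log_div hx.ne' (by norm_num)
  rw [h2, h3, h5, h30, l30, Acon]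
  ring



lemma floor_facts (n k : ℕ) (hk : 0 < k) (hkn : k ≤ n) :
    (1:ℝ) ≤ ((n / k : ℕ) : ℝ) ∧ ((n / k : ℕ) : ℝ) ≤ (n:ℝ)/k
      ∧ (n:ℝ)/k ≤ ((n / k : ℕ) : ℝ) + 1 := by
  have h1 : 1 ≤ n / k := (Nat.one_le_div_iff hk).mpr hkn
  have hd := Nat.div_add_mod n k
  have hm := Nat.mod_lt n hk
  have hk' : (0:ℝ) < (k:ℝ) := by exact_mod_cast hk
  refine ⟨by exact_mod_cast h1, Nat.cast_div_le, ?_⟩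
  rw [div_le_iff₀ hk']
  have : ((n:ℝ)) = (k:ℝ) * ((n / k : ℕ) : ℝ) + ((n % k : ℕ) : ℝ) := by exact_mod_cast hd.symm
  have hmr : ((n % k : ℕ) : ℝ) < (k:ℝ) := by exact_mod_cast hm
  nlinarith

lemma log_Np (n : ℕ) (hn : 1 ≤ n) :
    Real.log (Np n) = Real.log (n !) + Real.log ((n / 30)!) := by
  rw [Np, Nat.cast_mul]
  exact Real.log_mul (by exact_mod_cast n.factorial_pos.ne') (by
    exact_mod_cast (n / 30).factorial_pos.ne')

lemma log_Dp (n : ℕ) :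
    Real.log (Dp n) = Real.log ((n / 2)!) + (Real.log ((n / 3)!) + Real.log ((n / 5)!)) := by
  rw [Dp, Nat.cast_mul, Nat.cast_mul,
    Real.log_mul (by exact_mod_cast (n / 2).factorial_pos.ne')
      (by positivity),
    Real.log_mul (by exact_mod_cast (n / 3).factorial_pos.ne')
      (by exact_mod_cast (n / 5).factorial_pos.ne')]

lemma logR_lower (n : ℕ) (hn : 1000000 ≤ n) :
    Acon * (n:ℝ) - 4 * Real.log n - 3 ≤ Real.log (Np n) - Real.log (Dp n) := by
  have hx : (1000000:ℝ) ≤ (n:ℝ) := by exact_mod_cast hn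
  have hx0 : (0:ℝ) < (n:ℝ) := by linarith
  obtain ⟨h2a, h2b, h2c⟩ := floor_facts n 2 (by norm_num) (by omega)
  obtain ⟨h3a, h3b, h3c⟩ := floor_facts n 3 (by norm_num) (by omega)
  obtain ⟨h5a, h5b, h5c⟩ := floor_facts n 5 (by norm_num) (by omega)
  obtain ⟨h30a, h30b, h30c⟩ := floor_facts n 30 (by norm_num) (by omega)
  have hxk : ∀ k : ℝ, 2 ≤ k → k ≤ 30 → (1:ℝ) ≤ (n:ℝ)/k ∧ (n:ℝ)/k ≤ (n:ℝ) := by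
    intro k hk1 hk2
    constructor
    · rw [le_div_iff₀ (by linarith)]; linarith
    · rw [div_le_iff₀ (by linarith)]; nlinarith
  have hlogx : 0 ≤ Real.log n := Real.log_nonneg (by linarith)
  -- lower bounds on log Np
  have b1 := stirling_log_lower n (by omega)
  have b2 := stirling_log_lower (n / 30) (by omega)
  have s30 := Gstep (x := ((n / 30 : ℕ) : ℝ)) (y := (n:ℝ)/30)
    (by linarith) (hxk 30 (by norm_num) le_rfl).1 h30b h30c
  have l30 : Real.log ((n:ℝ)/30) ≤ Real.log n :=
    Real.log_le_log (by linarith [(hxk 30 (by norm_num) le_rfl).1])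
      (hxk 30 (by norm_num) le_rfl).2
  -- upper bounds on log Dp parts
  have u2 := stirling_log_upper (n / 2) (by omega)
  have u3 := stirling_log_upper (n / 3) (by omega)
  have u5 := stirling_log_upper (n / 5) (by omega)
  have g2 := Gmono h2a h2b
  have g3 := Gmono h3a h3b
  have g5 := Gmono h5a h5b
  have lm2 : Real.log ((n / 2 : ℕ) : ℝ) ≤ Real.log n :=
    Real.log_le_log (by linarith) (by exact_mod_cast Nat.cast_le.mpr (Nat.div_le_self n 2))
  have lm3 : Real.log ((n / 3 : ℕ) : ℝ) ≤ Real.log n :=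
    Real.log_le_log (by linarith) (by exact_mod_cast Nat.cast_le.mpr (Nat.div_le_self n 3))
  have lm5 : Real.log ((n / 5 : ℕ) : ℝ) ≤ Real.log n :=
    Real.log_le_log (by linarith) (by exact_mod_cast Nat.cast_le.mpr (Nat.div_le_self n 5))
  have key := Gsum (n:ℝ) hx0
  rw [log_Np n (by omega), log_Dp n]
  linarith

lemma logR_upper (n : ℕ) (hn : 1000000 ≤ n) :
    Real.log (Np n) - Real.log (Dp n) ≤ Acon * (n:ℝ) + 5 * Real.log n + 2 := by
  have hx : (1000000:ℝ) ≤ (n:ℝ) := by exact_mod_cast hn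
  have hx0 : (0:ℝ) < (n:ℝ) := by linarith
  obtain ⟨h2a, h2b, h2c⟩ := floor_facts n 2 (by norm_num) (by omega)
  obtain ⟨h3a, h3b, h3c⟩ := floor_facts n 3 (by norm_num) (by omega)
  obtain ⟨h5a, h5b, h5c⟩ := floor_facts n 5 (by norm_num) (by omega)
  obtain ⟨h30a, h30b, h30c⟩ := floor_facts n 30 (by norm_num) (by omega)
  have hxk : ∀ k : ℝ, 2 ≤ k → k ≤ 30 → (1:ℝ) ≤ (n:ℝ)/k ∧ (n:ℝ)/k ≤ (n:ℝ) := by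
    intro k hk1 hk2
    constructor
    · rw [le_div_iff₀ (by linarith)]; linarith
    · rw [div_le_iff₀ (by linarith)]; nlinarith
  have hlogx : 0 ≤ Real.log n := Real.log_nonneg (by linarith)
  have b1 := stirling_log_upper n (by omega)
  have b2 := stirling_log_upper (n / 30) (by omega)
  have g30 := Gmono h30a h30b
  have lm30 : Real.log ((n / 30 : ℕ) : ℝ) ≤ Real.log n :=
    Real.log_le_log (by linarith) (by exact_mod_cast Nat.cast_le.mpr (Nat.div_le_self n 30))
  have u2 := stirling_log_lower (n / 2) (by omega)
  have u3 := stirling_log_lower (n / 3) (by omega)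
  have u5 := stirling_log_lower (n / 5) (by omega)
  have s2 := Gstep (x := ((n / 2 : ℕ) : ℝ)) (y := (n:ℝ)/2)
    (by linarith) (hxk 2 (by norm_num) (by norm_num)).1 h2b h2c
  have s3 := Gstep (x := ((n / 3 : ℕ) : ℝ)) (y := (n:ℝ)/3)
    (by linarith) (hxk 3 (by norm_num) (by norm_num)).1 h3b h3c
  have s5 := Gstep (x := ((n / 5 : ℕ) : ℝ)) (y := (n:ℝ)/5)
    (by linarith) (hxk 5 (by norm_num) (by norm_num)).1 h5b h5c
  have l2 : Real.log ((n:ℝ)/2) ≤ Real.log n :=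
    Real.log_le_log (by linarith [(hxk 2 (by norm_num) (by norm_num)).1])
      (hxk 2 (by norm_num) (by norm_num)).2
  have l3 : Real.log ((n:ℝ)/3) ≤ Real.log n :=
    Real.log_le_log (by linarith [(hxk 3 (by norm_num) (by norm_num)).1])
      (hxk 3 (by norm_num) (by norm_num)).2
  have l5 : Real.log ((n:ℝ)/5) ≤ Real.log n :=
    Real.log_le_log (by linarith [(hxk 5 (by norm_num) (by norm_num)).1])
      (hxk 5 (by norm_num) (by norm_num)).2
  have key := Gsum (n:ℝ) hx0
  rw [log_Np n (by omega), log_Dp n]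
  linarith



lemma theta_upper : ∀ n : ℕ,
    Real.log (primorial n) ≤ 1.1056 * (n:ℝ) + 10 * (Real.log ((n:ℝ) + 1))^2 + 290000 := by
  intro n
  induction n using Nat.strong_induction_on with
  | _ n IH =>
    have hsq : 0 ≤ (Real.log ((n:ℝ) + 1))^2 := sq_nonneg _
    by_cases hn : n < 1000000
    · -- base case : primorial n ≤ 4 ^ n
      have h1 : (primorial n : ℝ) ≤ (4:ℝ) ^ n := by exact_mod_cast primorial_le_4_pow n
      have h2 := Real.log_le_log (by exact_mod_cast primorial_pos n) h1
      rw [Real.log_pow] at h2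
      have h4 : Real.log 4 = 2 * Real.log 2 := by
        rw [show (4:ℝ) = 2^(2:ℕ) by norm_num, Real.log_pow]; push_cast; ring
      have hn' : (n:ℝ) ≤ 1000000 := by exact_mod_cast hn.le
      have hn0 : (0:ℝ) ≤ (n:ℝ) := Nat.cast_nonneg n
      nlinarith [log2_hi]
    · push_neg at hn
      have h6 := IH (n / 6) (by omega)
      -- from divisibility
      have hdvd := Dp_primorial_dvd n (by omega)
      have hle : (Dp n : ℝ) * (primorial n : ℝ) ≤ (Np n : ℝ) * (primorial (n / 6) : ℝ) := by
        have := Nat.le_of_dvd (Nat.mul_pos (Np_pos n) (primorial_pos (n / 6))) hdvd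
        exact_mod_cast this
      have hlog : Real.log (Dp n) + Real.log (primorial n)
          ≤ Real.log (Np n) + Real.log (primorial (n / 6)) := by
        have l1 := Real.log_le_log
          (by exact_mod_cast Nat.mul_pos (Dp_pos n) (primorial_pos n)) hle
        rw [Real.log_mul (by exact_mod_cast (Dp_pos n).ne') (by
            exact_mod_cast (primorial_pos n).ne'),
          Real.log_mul (by exact_mod_cast (Np_pos n).ne') (by
            exact_mod_cast (primorial_pos (n / 6)).ne')] at l1
        exact l1
      have hR := logR_upper n hn
      -- numeric assembly
      have hm : ((n / 6 : ℕ) : ℝ) ≤ (n:ℝ) / 6 := Nat.cast_div_le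
      have hmlog : Real.log ((n:ℝ)) ≤ Real.log ((n:ℝ) + 1) :=
        Real.log_le_log (by positivity) (by linarith)
      -- log (n+1) ≥ log (n/6+1) + log 5
      have h5n : (5:ℝ) * (((n / 6 : ℕ) : ℝ) + 1) ≤ (n:ℝ) + 1 := by
        have : 5 * (n / 6) + 5 ≤ n + 1 := by omega
        exact_mod_cast this
      have hgap : Real.log (((n / 6 : ℕ) : ℝ) + 1) + Real.log 5 ≤ Real.log ((n:ℝ) + 1) := by
        have l := Real.log_le_log (by positivity) h5n
        rw [Real.log_mul (by norm_num) (by positivity)] at l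
        linarith
      have ha : 0 ≤ Real.log (((n / 6 : ℕ) : ℝ) + 1) := Real.log_nonneg (by
        have : (0:ℝ) ≤ ((n / 6 : ℕ) : ℝ) := Nat.cast_nonneg _
        linarith)
      have hb : 0 ≤ Real.log ((n:ℝ) + 1) := Real.log_nonneg (by
        have : (0:ℝ) ≤ (n:ℝ) := Nat.cast_nonneg _
        linarith)
      have hlogn_pos : 0 ≤ Real.log (n:ℝ) := Real.log_nonneg (by
        have : (1000000:ℝ) ≤ (n:ℝ) := by exact_mod_cast hn
        linarith)
      have hnbig : (1000000:ℝ) ≤ (n:ℝ) := by exact_mod_cast hn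
      -- key quadratic comparison
      have hquad : 5 * Real.log ((n:ℝ)) + 2 + 10 * (Real.log (((n / 6 : ℕ) : ℝ) + 1))^2
          ≤ 23 + 10 * (Real.log ((n:ℝ) + 1))^2 := by
        nlinarith [log5_lo, hgap, ha, hb, hmlog]
      have hAcon := Acon_hi
      nlinarith


lemma theta_lower (n : ℕ) (hn : 1000000 ≤ n) :
    Acon * (n:ℝ) - 4 * Real.log n - 3 - (Nat.sqrt n : ℝ) * Real.log n
      ≤ Real.log (primorial n) := by
  have hnp : 0 < n := by omega
  have h1 : (Np n : ℝ) ≤ (Dp n : ℝ) * (Psi n : ℝ) := by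
    exact_mod_cast Nat.le_of_dvd (Nat.mul_pos (Dp_pos n) (Psi_pos n)) (Np_dvd n hnp)
  have h2 : Real.log (Np n) ≤ Real.log (Dp n) + Real.log (Psi n) := by
    have := Real.log_le_log (by exact_mod_cast Np_pos n) h1
    rwa [Real.log_mul (by exact_mod_cast (Dp_pos n).ne')
      (by exact_mod_cast (Psi_pos n).ne')] at this
  have h3 : (Psi n : ℝ) ≤ (primorial n : ℝ) * (n:ℝ) ^ (Nat.sqrt n) := by
    exact_mod_cast Psi_le n hnp
  have h4 : Real.log (Psi n) ≤ Real.log (primorial n) + (Nat.sqrt n : ℝ) * Real.log n := by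
    have := Real.log_le_log (by exact_mod_cast Psi_pos n) h3
    rwa [Real.log_mul (by exact_mod_cast (primorial_pos n).ne')
      (by positivity), Real.log_pow] at this
  have h5 := logR_lower n hn
  linarith

lemma no_gap_primorial (p : ℕ) (hp : p.Prime) (hbig : 11 ≤ p)
    (hno : ¬∃ q : ℕ, q.Prime ∧ p < q ∧ 3 * q < 4 * p) :
    primorial (4 * p / 3) = primorial p := by
  rw [primorial, primorial]
  apply Finset.prod_congr _ (fun _ _ => rfl)
  ext q
  simp only [Finset.mem_filter, Finset.mem_range, Nat.lt_succ_iff]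
  constructor
  · rintro ⟨hq1, hq2⟩
    refine ⟨?_, hq2⟩
    by_contra hc
    push_neg at hc
    have h3q : 3 * q ≤ 4 * p := by omega
    have hne : 3 * q ≠ 4 * p := by
      intro he
      have hdvd : (3:ℕ) ∣ 4 * p := ⟨q, by omega⟩
      rcases (Nat.Prime.dvd_mul (by norm_num)).mp hdvd with h | h
      · norm_num at h
      · have := (Nat.prime_dvd_prime_iff_eq (by norm_num) hp).mp h
        omega
    exact hno ⟨q, hq2, hc, by omega⟩
  · rintro ⟨hq1, hq2⟩
    exact ⟨by omega, hq2⟩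

set_option maxHeartbeats 1000000 in
lemma nagura_large (p : ℕ) (hp : p.Prime) (hbig : 10000000 ≤ p) :
    ∃ q : ℕ, q.Prime ∧ p < q ∧ 3 * q < 4 * p := by
  by_contra hno
  set n := 4 * p / 3 with hndef
  have hn6 : 1000000 ≤ n := by omega
  have hprim : primorial n = primorial p := no_gap_primorial p hp (by omega) hno
  have hlow := theta_lower n hn6
  have hup := theta_upper p
  rw [hprim] at hlow
  -- numeric contradiction
  set y : ℝ := (n:ℝ) + 1 with hy
  have hy1 : (1:ℝ) ≤ y := by
    rw [hy]; have : (0:ℝ) ≤ (n:ℝ) := Nat.cast_nonneg n; linarith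
  set r : ℝ := Real.sqrt (Real.sqrt (Real.sqrt y)) with hr
  have hy0 : (0:ℝ) ≤ y := by linarith
  have hs1 : Real.sqrt y ^ 2 = y := Real.sq_sqrt hy0
  have hs2 : Real.sqrt (Real.sqrt y) ^ 2 = Real.sqrt y := Real.sq_sqrt (Real.sqrt_nonneg y)
  have hs3 : r ^ 2 = Real.sqrt (Real.sqrt y) := Real.sq_sqrt (Real.sqrt_nonneg _)
  have hr8 : r ^ 8 = y := by
    have : ((r ^ 2) ^ 2) ^ 2 = y := by rw [hs3, hs2, hs1]
    nlinarith [this]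
  have hr0 : (0:ℝ) ≤ r := Real.sqrt_nonneg _
  have hr1 : (1:ℝ) ≤ r := by
    by_contra hc
    push_neg at hc
    have h8 := pow_lt_one₀ hr0 hc (by norm_num : (8:ℕ) ≠ 0)
    rw [hr8] at h8
    linarith
  have hrbig : (7.49:ℝ) ≤ r := by
    by_contra hc
    push_neg at hc
    have h8 : r ^ 8 < 7.49 ^ 8 := by
      have := pow_lt_pow_left₀ hc hr0 (n := 8) (by norm_num)
      exact this
    rw [hr8] at h8
    have hnval : (10000000:ℝ) ≤ (n:ℝ) := by
      have : 10000000 ≤ n := by omega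
      exact_mod_cast this
    rw [hy] at h8
    norm_num at h8
    linarith
  -- log y ≤ 8 r
  have hlogy : Real.log y ≤ 8 * r := by
    have : Real.log y = 8 * Real.log r := by
      rw [← hr8, Real.log_pow]; push_cast; ring
    rw [this]
    have := Real.log_le_sub_one_of_pos (show (0:ℝ) < r by linarith)
    linarith
  have hlogy0 : 0 ≤ Real.log y := Real.log_nonneg hy1
  have hlogn : Real.log (n:ℝ) ≤ Real.log y := by
    refine Real.log_le_log ?_ (by rw [hy]; linarith)
    have : (1000000:ℝ) ≤ (n:ℝ) := by exact_mod_cast hn6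
    linarith
  have hlogn0 : 0 ≤ Real.log (n:ℝ) := Real.log_nonneg (by
    have : (1000000:ℝ) ≤ (n:ℝ) := by exact_mod_cast hn6
    linarith)
  have hlogp : Real.log ((p:ℝ) + 1) ≤ Real.log y := by
    refine Real.log_le_log (by positivity) ?_
    rw [hy]
    have : p ≤ n := by omega
    have := (Nat.cast_le (α := ℝ)).mpr this
    linarith
  have hlogp0 : 0 ≤ Real.log ((p:ℝ) + 1) := Real.log_nonneg (by
    have : (0:ℝ) ≤ (p:ℝ) := Nat.cast_nonneg p
    linarith)
  -- sqrt n ≤ r^4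
  have hsqrtn : (Nat.sqrt n : ℝ) ≤ r ^ 4 := by
    have h1 : ((Nat.sqrt n : ℝ)) ^ 2 ≤ (n:ℝ) := by
      have := Nat.sqrt_le' n
      exact_mod_cast this
    have h2 : (n:ℝ) ≤ (r ^ 4) ^ 2 := by
      have : (r ^ 4) ^ 2 = y := by rw [← hr8]; ring
      rw [this, hy]; linarith
    nlinarith [Nat.cast_nonneg (α := ℝ) (Nat.sqrt n), pow_nonneg hr0 4]
  -- cast bounds between n and p
  have hnp4 : 4 * (p:ℝ) - 2 ≤ 3 * (n:ℝ) := by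
    have h : 4 * p ≤ 3 * n + 2 := by omega
    have h2 := (Nat.cast_le (α := ℝ)).mpr h
    push_cast at h2
    linarith
  have hpn : (p:ℝ) ≤ (n:ℝ) := by
    have : p ≤ n := by omega
    exact_mod_cast this
  -- assemble the contradiction
  have hA := Acon_lo
  have hyn : y = (n:ℝ) + 1 := hy
  -- error terms
  have e1 : (Nat.sqrt n : ℝ) * Real.log (n:ℝ) ≤ 8 * r ^ 5 := by
    have h1 : (Nat.sqrt n : ℝ) * Real.log (n:ℝ) ≤ r ^ 4 * (8 * r) := by
      have := mul_le_mul hsqrtn (hlogn.trans hlogy) hlogn0 (pow_nonneg hr0 4)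
      linarith
    nlinarith [pow_nonneg hr0 4]
  have e2 : (Real.log ((p:ℝ) + 1)) ^ 2 ≤ 64 * r ^ 2 := by
    have h1 : Real.log ((p:ℝ) + 1) ≤ 8 * r := hlogp.trans hlogy
    nlinarith
  have e3 : Real.log (n:ℝ) ≤ 8 * r := hlogn.trans hlogy
  -- the polynomial inequality
  have hr2 : (56:ℝ) ≤ r ^ 2 := by nlinarith
  have hr3 : (420:ℝ) ≤ r ^ 3 := by nlinarith
  have m1 : 420 * r ^ 5 ≤ r ^ 8 := by
    nlinarith [mul_nonneg (pow_nonneg hr0 5) (sub_nonneg.mpr hr3)]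
  have m2 : 420 * r ^ 2 ≤ r ^ 5 := by
    nlinarith [mul_nonneg (pow_nonneg hr0 2) (sub_nonneg.mpr hr3)]
  have hrr2 : r ≤ r ^ 2 := by nlinarith
  have poly : 8 * r ^ 5 + 640 * r ^ 2 + 32 * r + 291000 < 0.092 * (r ^ 8 - 1) := by
    linarith
  -- combine hlow ≤ hup
  have hnr : (n:ℝ) = r ^ 8 - 1 := by rw [hr8, hy]; ring
  have hAn : 0.92126 * (n:ℝ) ≤ Acon * (n:ℝ) :=
    mul_le_mul_of_nonneg_right hA (Nat.cast_nonneg n)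
  have hchain := hlow.trans hup
  linarith




def Cond (N : ℕ) : Prop := ∀ p : ℕ, Nat.Prime p → N ≤ p → p ≤ 10000000 →
  ∃ q : ℕ, Nat.Prime q ∧ p < q ∧ 3 * q < 4 * p

lemma chain_step {a b : ℕ} (hb : Nat.Prime b) (hab : 3 * b < 4 * a) (hba : a < b)
    (H : Cond b) : Cond a := by
  intro p hp h1 h2
  by_cases h : p < b
  · exact ⟨b, hb, h, by omega⟩
  · exact H p hp (by omega) h2

lemma base : Cond 12771497 := by
  intro p _ h1 h2
  omega

lemma c50 : Cond 9578627 := chain_step (by norm_num) (by norm_num) (by norm_num) base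
lemma c49 : Cond 7183987 := chain_step (by norm_num) (by norm_num) (by norm_num) c50
lemma c48 : Cond 5388007 := chain_step (by norm_num) (by norm_num) (by norm_num) c49
lemma c47 : Cond 4041007 := chain_step (by norm_num) (by norm_num) (by norm_num) c48
lemma c46 : Cond 3030767 := chain_step (by norm_num) (by norm_num) (by norm_num) c47
lemma c45 : Cond 2273077 := chain_step (by norm_num) (by norm_num) (by norm_num) c46
lemma c44 : Cond 1704809 := chain_step (by norm_num) (by norm_num) (by norm_num) c45
lemma c43 : Cond 1278623 := chain_step (by norm_num) (by norm_num) (by norm_num) c44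
lemma c42 : Cond 958973 := chain_step (by norm_num) (by norm_num) (by norm_num) c43
lemma c41 : Cond 719239 := chain_step (by norm_num) (by norm_num) (by norm_num) c42
lemma c40 : Cond 539449 := chain_step (by norm_num) (by norm_num) (by norm_num) c41
lemma c39 : Cond 404597 := chain_step (by norm_num) (by norm_num) (by norm_num) c40
lemma c38 : Cond 303473 := chain_step (by norm_num) (by norm_num) (by norm_num) c39
lemma c37 : Cond 227611 := chain_step (by norm_num) (by norm_num) (by norm_num) c38
lemma c36 : Cond 170711 := chain_step (by norm_num) (by norm_num) (by norm_num) c37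
lemma c35 : Cond 128053 := chain_step (by norm_num) (by norm_num) (by norm_num) c36
lemma c34 : Cond 96059 := chain_step (by norm_num) (by norm_num) (by norm_num) c35
lemma c33 : Cond 72047 := chain_step (by norm_num) (by norm_num) (by norm_num) c34
lemma c32 : Cond 54037 := chain_step (by norm_num) (by norm_num) (by norm_num) c33
lemma c31 : Cond 40531 := chain_step (by norm_num) (by norm_num) (by norm_num) c32
lemma c30 : Cond 30403 := chain_step (by norm_num) (by norm_num) (by norm_num) c31
lemma c29 : Cond 22817 := chain_step (by norm_num) (by norm_num) (by norm_num) c30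
lemma c28 : Cond 17137 := chain_step (by norm_num) (by norm_num) (by norm_num) c29
lemma c27 : Cond 12853 := chain_step (by norm_num) (by norm_num) (by norm_num) c28
lemma c26 : Cond 9661 := chain_step (by norm_num) (by norm_num) (by norm_num) c27
lemma c25 : Cond 7253 := chain_step (by norm_num) (by norm_num) (by norm_num) c26
lemma c24 : Cond 5449 := chain_step (by norm_num) (by norm_num) (by norm_num) c25
lemma c23 : Cond 4099 := chain_step (by norm_num) (by norm_num) (by norm_num) c24
lemma c22 : Cond 3079 := chain_step (by norm_num) (by norm_num) (by norm_num) c23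
lemma c21 : Cond 2311 := chain_step (by norm_num) (by norm_num) (by norm_num) c22
lemma c20 : Cond 1741 := chain_step (by norm_num) (by norm_num) (by norm_num) c21
lemma c19 : Cond 1307 := chain_step (by norm_num) (by norm_num) (by norm_num) c20
lemma c18 : Cond 983 := chain_step (by norm_num) (by norm_num) (by norm_num) c19
lemma c17 : Cond 739 := chain_step (by norm_num) (by norm_num) (by norm_num) c18
lemma c16 : Cond 557 := chain_step (by norm_num) (by norm_num) (by norm_num) c17
lemma c15 : Cond 421 := chain_step (by norm_num) (by norm_num) (by norm_num) c16
lemma c14 : Cond 317 := chain_step (by norm_num) (by norm_num) (by norm_num) c15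
lemma c13 : Cond 241 := chain_step (by norm_num) (by norm_num) (by norm_num) c14
lemma c12 : Cond 181 := chain_step (by norm_num) (by norm_num) (by norm_num) c13
lemma c11 : Cond 137 := chain_step (by norm_num) (by norm_num) (by norm_num) c12
lemma c10 : Cond 103 := chain_step (by norm_num) (by norm_num) (by norm_num) c11
lemma c9 : Cond 79 := chain_step (by norm_num) (by norm_num) (by norm_num) c10
lemma c8 : Cond 61 := chain_step (by norm_num) (by norm_num) (by norm_num) c9
lemma c7 : Cond 47 := chain_step (by norm_num) (by norm_num) (by norm_num) c8
lemma c6 : Cond 37 := chain_step (by norm_num) (by norm_num) (by norm_num) c7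
lemma c5 : Cond 29 := chain_step (by norm_num) (by norm_num) (by norm_num) c6
lemma c4 : Cond 23 := chain_step (by norm_num) (by norm_num) (by norm_num) c5
lemma c3 : Cond 19 := chain_step (by norm_num) (by norm_num) (by norm_num) c4
lemma c2 : Cond 17 := chain_step (by norm_num) (by norm_num) (by norm_num) c3
lemma c1 : Cond 13 := chain_step (by norm_num) (by norm_num) (by norm_num) c2
lemma c0 : Cond 11 := chain_step (by norm_num) (by norm_num) (by norm_num) c1

lemma nagura_small : Cond 11 := c0


end NaguraAux


theorem nagura_prime_between (p : ℕ) (hp : p.Prime) (h11 : 11 ≤ p) :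
    ∃ q : ℕ, q.Prime ∧ p < q ∧ 3 * q < 4 * p := by
  by_cases h : p ≤ 10000000
  · exact NaguraAux.nagura_small p hp h11 h
  · exact NaguraAux.nagura_large p hp (by omega)
end

section
/- The unique partition of n = c(c+1)/2 which is a 2-core is the staircase γ_c = (c, c-1, ..., 1); in particular, the staircase partition γ_c is self-conjugate. -/
lemma staircase_succ (c : ℕ) : staircase (c+1) = (c+1) :: staircase c := by
  simp [staircase, List.range_succ]

lemma staircase_length (c : ℕ) : (staircase c).length = c := by simp [staircase]

lemma mem_staircase {c x : ℕ} (h : x ∈ staircase c) : 1 ≤ x ∧ x ≤ c := by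
  simp [staircase] at h; omega

lemma staircase_sorted (c : ℕ) : (staircase c).Pairwise (· ≥ ·) := by
  induction c with
  | zero => simp [staircase]
  | succ c ih =>
    rw [staircase_succ, List.pairwise_cons]
    exact ⟨fun b hb => le_trans (mem_staircase hb).2 (by omega), ih⟩

lemma staircase_getD {c k : ℕ} (h : k < c) : (staircase c).getD k 0 = c - k := by
  induction c generalizing k with
  | zero => omega
  | succ c ih =>
    rw [staircase_succ]
    cases k with
    | zero => simp
    | succ k => simpa using ih (by omega)

lemma conjPart_cons (a : ℕ) (t : List ℕ) (j : ℕ) :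
    conjPart (a :: t) j = (if j ≤ a then 1 else 0) + conjPart t j := by
  simp only [conjPart, List.filter_cons, decide_eq_true_eq]
  split <;> simp [Nat.add_comm]

lemma conjPart_staircase (c : ℕ) {j : ℕ} (hj : 1 ≤ j) :
    conjPart (staircase c) j = c + 1 - j := by
  induction c with
  | zero => simp [staircase, conjPart]; omega
  | succ c ih =>
    rw [staircase_succ, conjPart_cons, ih]
    split <;> omega

lemma conjPart_le_length (l : List ℕ) (j : ℕ) : conjPart l j ≤ l.length :=
  List.length_filter_le _ _

lemma lt_conjPart_iff {l : List ℕ} (hl : l.Pairwise (· ≥ ·)) (j idx : ℕ) :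
    idx < conjPart l j ↔ idx < l.length ∧ j ≤ l.getD idx 0 := by
  induction l generalizing idx with
  | nil => simp [conjPart]
  | cons a t ih =>
    rw [List.pairwise_cons] at hl
    by_cases hja : j ≤ a
    · rw [conjPart_cons, if_pos hja]
      cases idx with
      | zero => simpa using hja
      | succ k =>
        simp only [List.length_cons, List.getD_cons_succ]
        rw [Nat.add_comm 1, Nat.add_lt_add_iff_right, ih hl.2]
        omega
    · have ht : conjPart t j = 0 := by
        simp only [conjPart, List.length_eq_zero_iff, List.filter_eq_nil_iff]
        intro x hx
        simp only [decide_eq_true_eq]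
        exact fun h => hja (le_trans h (hl.1 x hx))
      rw [conjPart_cons, if_neg hja, ht]
      constructor
      · omega
      · rintro ⟨h1, h2⟩
        exfalso
        have hm : (a :: t).getD idx 0 ∈ a :: t := by
          rw [List.getD_eq_getElem _ 0 h1]; exact List.getElem_mem h1
        rcases List.mem_cons.mp hm with h | h
        · omega
        · exact hja (le_trans h2 (le_trans (hl.1 _ h) (le_refl a)))

lemma cellMem_iff {l : List ℕ} (hl : l.Pairwise (· ≥ ·)) (i j : ℕ) :
    cellMem l i j ↔ 1 ≤ i ∧ 1 ≤ j ∧ i ≤ conjPart l j := by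
  constructor
  · rintro ⟨h1, h2, h3, h4⟩
    refine ⟨h1, h3, ?_⟩
    have := (lt_conjPart_iff hl j (i-1)).mpr ⟨by omega, h4⟩
    omega
  · rintro ⟨h1, h2, h3⟩
    have := (lt_conjPart_iff hl j (i-1)).mp (by omega)
    exact ⟨h1, by omega, h2, this.2⟩

lemma getD_anti {l : List ℕ} (hl : l.Pairwise (· ≥ ·)) {i k : ℕ} (hik : i ≤ k)
    (hk : k < l.length) : l.getD k 0 ≤ l.getD i 0 := by
  rcases eq_or_lt_of_le hik with rfl | h
  · exact le_refl _
  · rw [List.getD_eq_getElem _ 0 hk, List.getD_eq_getElem _ 0 (lt_trans h hk)]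
    exact hl.rel_get_of_lt h

lemma getD_pos {l : List ℕ} (hpos : ∀ x ∈ l, 0 < x) {k : ℕ} (hk : k < l.length) :
    0 < l.getD k 0 := by
  rw [List.getD_eq_getElem _ 0 hk]
  exact hpos _ (List.getElem_mem hk)

lemma claim1 {l : List ℕ} (hsort : l.Pairwise (· ≥ ·)) (hpos : ∀ x ∈ l, 0 < x)
    (hno : ¬ HasHook l 2) {k : ℕ} (hk : k + 1 < l.length) :
    l.getD k 0 = l.getD (k+1) 0 + 1 := by
  set a := l.getD k 0 with h_a
  set b := l.getD (k+1) 0 with h_b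
  have hb : 0 < b := getD_pos hpos hk
  have hba : b ≤ a := getD_anti hsort (Nat.le_succ k) hk
  rcases Nat.lt_trichotomy (b+1) a with h | h | h
  · exfalso
    have h1 : k < conjPart l (a-1) :=
      (lt_conjPart_iff hsort _ _).mpr ⟨by omega, by omega⟩
    have h2 : ¬ (k+1 < conjPart l (a-1)) := by
      intro hc
      have := ((lt_conjPart_iff hsort _ _).mp hc).2
      omega
    have hconj : conjPart l (a-1) = k + 1 := by omega
    apply hno
    refine ⟨k+1, a-1, (cellMem_iff hsort _ _).mpr ⟨by omega, by omega, by omega⟩, ?_⟩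
    simp only [hookLength, Nat.add_sub_cancel, hconj, ← h_a]
    omega
  · omega
  · exfalso
    have hab : b = a := by omega
    set t := conjPart l a with ht
    have htn : t ≤ l.length := conjPart_le_length l a
    have h2 : k + 1 < t := (lt_conjPart_iff hsort _ _).mpr ⟨hk, by omega⟩
    have hga : a ≤ l.getD (t-2) 0 :=
      ((lt_conjPart_iff hsort _ _).mp (show t-2 < t by omega)).2
    have hga' : l.getD (t-2) 0 ≤ a := getD_anti hsort (show k ≤ t-2 by omega) (by omega)
    apply hno
    refine ⟨t-1, a, (cellMem_iff hsort _ _).mpr ⟨by omega, by omega, by omega⟩, ?_⟩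
    simp only [hookLength]
    have he : t - 1 - 1 = t - 2 := by omega
    rw [he, ← ht]
    omega

lemma claim2 {l : List ℕ} (hsort : l.Pairwise (· ≥ ·)) (hpos : ∀ x ∈ l, 0 < x)
    (hno : ¬ HasHook l 2) (hn : 0 < l.length) : l.getD (l.length - 1) 0 = 1 := by
  set n := l.length with hnd
  set a := l.getD (n-1) 0 with h_a
  have ha : 0 < a := getD_pos hpos (by omega)
  by_contra h
  have h2 : 2 ≤ a := by omega
  have hconj : n - 1 < conjPart l (a-1) :=
    (lt_conjPart_iff hsort _ _).mpr ⟨by omega, by omega⟩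
  have hconj2 : conjPart l (a-1) ≤ n := conjPart_le_length l _
  apply hno
  refine ⟨n, a-1, (cellMem_iff hsort _ _).mpr ⟨by omega, by omega, by omega⟩, ?_⟩
  simp only [hookLength, ← h_a]
  omega

lemma stair_struct {l : List ℕ} (hsort : l.Pairwise (· ≥ ·)) (hpos : ∀ x ∈ l, 0 < x)
    (hno : ¬ HasHook l 2) : ∀ k < l.length, l.getD k 0 = l.length - k := by
  have key : ∀ m k, k < l.length → l.length - k = m → l.getD k 0 = m := by
    intro m
    induction m with
    | zero => intro k hk h; omega
    | succ m ih =>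
      intro k hk h
      rcases Nat.lt_or_ge (k+1) l.length with h1 | h1
      · rw [claim1 hsort hpos hno h1, ih (k+1) h1 (by omega)]
      · have hk' : k = l.length - 1 := by omega
        have := claim2 hsort hpos hno (by omega)
        rw [hk']
        omega
  intro k hk
  exact key _ k hk rfl

lemma staircase_sum_two (c : ℕ) : 2 * (staircase c).sum = c * (c + 1) := by
  induction c with
  | zero => simp [staircase]
  | succ c ih =>
    rw [staircase_succ, List.sum_cons]
    ring_nf
    ring_nf at ih
    omega

lemma eq_staircase {l : List ℕ} (hsort : l.Pairwise (· ≥ ·)) (hpos : ∀ x ∈ l, 0 < x)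
    (hno : ¬ HasHook l 2) : l = staircase l.length := by
  have hlen : l.length = (staircase l.length).length := (staircase_length _).symm
  apply List.ext_getElem hlen
  intro k h1 h2
  have := stair_struct hsort hpos hno k h1
  rw [List.getD_eq_getElem _ 0 h1] at this
  rw [this, ← List.getD_eq_getElem _ 0 h2, staircase_getD (by omega)]

lemma conjList_staircase (c : ℕ) : conjList (staircase c) = staircase c := by
  have hhead : (staircase c).headD 0 = c := by
    cases c with
    | zero => simp [staircase]
    | succ c => rw [staircase_succ]; rfl
  apply List.ext_getElem
  · simp only [conjList, hhead, List.length_map, List.length_range, staircase_length]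
  · intro k h1 h2
    have hk : k < c := by simpa [staircase_length] using h2
    rw [← List.getD_eq_getElem _ 0 h2, staircase_getD hk]
    simp [conjList, hhead, conjPart_staircase c (show 1 ≤ k + 1 by omega)]

theorem staircase_unique_two_core_and_self_conjugate (c : ℕ) :
    (IsPartition (staircase c) ∧ (staircase c).sum = c * (c + 1) / 2 ∧
      ¬ HasHook (staircase c) 2) ∧
    (∀ l : List ℕ, IsPartition l → l.sum = c * (c + 1) / 2 → ¬ HasHook l 2 →
      l = staircase c) ∧
    conjList (staircase c) = staircase c := by
  have hsum : (staircase c).sum = c * (c + 1) / 2 := by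
    have := staircase_sum_two c; omega
  refine ⟨⟨⟨staircase_sorted c, fun x hx => (mem_staircase hx).1⟩, hsum, ?_⟩, ?_,
    conjList_staircase c⟩
  · rintro ⟨i, j, hmem, hhook⟩
    rw [cellMem_iff (staircase_sorted c)] at hmem
    obtain ⟨hi, hj, hij⟩ := hmem
    rw [conjPart_staircase c hj] at hij
    have hic : i - 1 < c := by omega
    simp only [hookLength, staircase_getD hic, conjPart_staircase c hj] at hhook
    omega
  · rintro l ⟨hsort, hpos⟩ hlsum hno
    have heq := eq_staircase hsort hpos hno
    have h2 : 2 * l.sum = l.length * (l.length + 1) := by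
      conv_lhs => rw [heq]
      rw [staircase_sum_two l.length]
    have h3 : 2 * l.sum = c * (c + 1) := by
      rw [hlsum]
      have := staircase_sum_two c
      omega
    have hlc : l.length = c := by nlinarith
    rw [heq, hlc]
end
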